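/- arXiv:2411.19926 — 4 statements merged into one kernel-verified Lean document; each statement's English description precedes it below -/
import Mathlib

section
/- Let n ≥ 2 and let A ∈ ℂ^{n×n} satisfy ‖A‖ ≤ 1 (operator norm) and η(A) > 0. Then κ_V(A) ≤ n · 2^n · η(A)^{1−n}. -/
open MeasureTheory Matrix
open scoped ENNReal

noncomputable section

/-- ℓ²→ℓ² operator norm of a complex square matrix. -/
def opNorm {n : ℕ} (A : Matrix (Fin n) (Fin n) ℂ) : ℝ :=
  ‖(Matrix.toEuclideanCLM (𝕜 := ℂ) A : EuclideanSpace ℂ (Fin n) →L[ℂ] EuclideanSpace ℂ (Fin n))‖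

/-- `svAsc A i` : the `i`-th *smallest* singular value of `A` (0-indexed). -/
def svAsc {n : ℕ} (A : Matrix (Fin n) (Fin n) ℂ) (i : Fin n) : ℝ :=
  Real.sqrt ((Matrix.isHermitian_conjTranspose_mul_self A).eigenvalues
    (Tuple.sort ((Matrix.isHermitian_conjTranspose_mul_self A).eigenvalues) i))

/-- `sLow A m` = σ_{n-m}(A), the (m+1)-th smallest singular value. -/
def sLow {n : ℕ} (A : Matrix (Fin n) (Fin n) ℂ) (m : ℕ) : ℝ :=
  if h : m < n then svAsc A ⟨m, h⟩ else 0

/-- the ε-pseudospectrum of a matrix, as a subset of ℂ. -/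
def pspec {n : ℕ} (ε : ℝ) (A : Matrix (Fin n) (Fin n) ℂ) : Set ℂ :=
  {z | sLow (z • (1 : Matrix (Fin n) (Fin n) ℂ) - A) 0 ≤ ε}

open scoped Classical in
/-- minimum gap between eigenvalues (counted with multiplicity). -/
def minGap {n : ℕ} (A : Matrix (Fin n) (Fin n) ℂ) : ℝ :=
  sInf {d | ∃ a ∈ A.charpoly.roots, ∃ b ∈ A.charpoly.roots.erase a, d = ‖a - b‖}

/-- eigenvector condition number. -/
def kappaV {n : ℕ} (A : Matrix (Fin n) (Fin n) ℂ) : ℝ≥0∞ :=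
  ⨅ (V : Matrix (Fin n) (Fin n) ℂ) (D : Matrix (Fin n) (Fin n) ℂ)
    (_ : IsUnit V) (_ : D.IsDiag) (_ : A = V * D * V⁻¹),
    ENNReal.ofReal (opNorm V * opNorm V⁻¹)

/-- spectral radius of a matrix. -/
def spr {n : ℕ} (A : Matrix (Fin n) (Fin n) ℂ) : ℝ :=
  sSup {x : ℝ | ∃ μ ∈ spectrum ℂ A, x = ‖μ‖}

/-- ℓ∞→ℓ∞ operator norm (max absolute row sum). -/
def infNorm {n : ℕ} (A : Matrix (Fin n) (Fin n) ℂ) : ℝ :=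
  ⨆ i, ∑ j, ‖A i j‖

/-- ℓ² norm of a vector in ℂⁿ. -/
def l2norm {n : ℕ} (v : Fin n → ℂ) : ℝ :=
  Real.sqrt (∑ j, ‖v j‖ ^ 2)

/-- standard complex Gaussian measure on ℂ. -/
def gaussianC : Measure ℂ :=
  MeasureTheory.volume.withDensity fun z => ENNReal.ofReal (Real.pi⁻¹ * Real.exp (-(‖z‖ ^ 2)))

/-- law of δ ⬝ g : δ Bernoulli(ρ), g standard complex Gaussian, independent. -/
def sparseG (ρ : ℝ) : Measure ℂ :=
  ENNReal.ofReal ρ • gaussianC + ENNReal.ofReal (1 - ρ) • Measure.dirac 0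

/-- law of a vector with i.i.d. sparse-Gaussian entries. -/
def vecLaw (n : ℕ) (ρ : ℝ) : Measure (Fin n → ℂ) :=
  Measure.pi fun _ => sparseG ρ

instance matrixMeasurableSpace {n : ℕ} : MeasurableSpace (Matrix (Fin n) (Fin n) ℂ) :=
  inferInstanceAs (MeasurableSpace (Fin n → Fin n → ℂ))

/-- law of the random matrix N_g with i.i.d. sparse-Gaussian entries. -/
def matLaw (n : ℕ) (ρ : ℝ) : Measure (Matrix (Fin n) (Fin n) ℂ) :=
  Measure.pi fun _ : Fin n => vecLaw n ρ

/-- Lévy concentration p(v,r) of ⟨ĝ ⊙ δ̂, v⟩. -/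
def pconc (n : ℕ) (ρ : ℝ) (v : Fin n → ℂ) (r : ℝ) : ℝ≥0∞ :=
  ⨆ z : ℂ, vecLaw n ρ {x | ‖(∑ j, x j * (starRingEnd ℂ) (v j)) - z‖ ≤ r}

/-- incompressible unit vectors. -/
def Incomp (n : ℕ) (ρ : ℝ) (r s : ℝ) : Set (Fin n → ℂ) :=
  {v | l2norm v = 1 ∧ pconc n ρ v r ≤ ENNReal.ofReal s}

/-- compressible unit vectors. -/
def Comp (n : ℕ) (ρ : ℝ) (r s : ℝ) : Set (Fin n → ℂ) :=
  {v | l2norm v = 1 ∧ ENNReal.ofReal s ≤ pconc n ρ v r}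

/-- eigenvalue condition number κ(λ_j) read off from a diagonalizing matrix V:
    (norm of j-th column of V) times (norm of j-th row of V⁻¹). -/
def evCond {n : ℕ} (V : Matrix (Fin n) (Fin n) ℂ) (j : Fin n) : ℝ :=
  l2norm (fun i => V i j) * l2norm (fun i => V⁻¹ j i)

/-- the event that `B` has `n` distinct eigenvalues with all squared
    eigenvalue condition numbers at most τ. -/
def distinctCondEvent {n : ℕ} (τ : ℝ) (B : Matrix (Fin n) (Fin n) ℂ) : Prop :=
  ∃ (V : Matrix (Fin n) (Fin n) ℂ) (lam : Fin n → ℂ), Function.Injective lam ∧ IsUnit V ∧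
    B = V * Matrix.diagonal lam * V⁻¹ ∧ ∀ j, (evCond V j) ^ 2 ≤ τ

section AuxKappa
open Polynomial
open scoped Matrix.Norms.L2Operator

variable {n : ℕ}

lemma opNorm_eq_norm (A : Matrix (Fin n) (Fin n) ℂ) : opNorm A = ‖A‖ := rfl

lemma euclid_mulVec_le (A : Matrix (Fin n) (Fin n) ℂ) (x : EuclideanSpace ℂ (Fin n)) :
    ‖(EuclideanSpace.equiv (Fin n) ℂ).symm (A *ᵥ (x : Fin n → ℂ))‖ ≤ ‖A‖ * ‖x‖ :=
  Matrix.l2_opNorm_mulVec A x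

set_option maxHeartbeats 1000000 in
lemma opNorm_le_frob (M : Matrix (Fin n) (Fin n) ℂ) :
    ‖M‖ ≤ Real.sqrt (∑ i, ∑ j, ‖M i j‖ ^ 2) := by
  refine ContinuousLinearMap.opNorm_le_bound _ (Real.sqrt_nonneg _) fun x => ?_
  have key : ∀ i, ‖(M *ᵥ (x : Fin n → ℂ)) i‖ ≤ Real.sqrt (∑ j, ‖M i j‖ ^ 2) * ‖x‖ := by
    intro i
    have h1 : (M *ᵥ (x : Fin n → ℂ)) i = inner ℂ ((EuclideanSpace.equiv (Fin n) ℂ).symm (fun j => star (M i j))) x := by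
      simp [Matrix.mulVec, dotProduct, PiLp.inner_apply, RCLike.inner_apply,
        mul_comm]
    rw [h1]
    calc ‖(inner ℂ ((EuclideanSpace.equiv (Fin n) ℂ).symm (fun j => star (M i j))) x : ℂ)‖
        ≤ ‖(EuclideanSpace.equiv (Fin n) ℂ).symm (fun j => star (M i j))‖ * ‖x‖ :=
          norm_inner_le_norm _ _
      _ = Real.sqrt (∑ j, ‖M i j‖ ^ 2) * ‖x‖ := by
          congr 1
          rw [EuclideanSpace.norm_eq]
          simp
  have h2 : ‖(toEuclideanLin.trans LinearMap.toContinuousLinearMap) M x‖ = Real.sqrt (∑ i, ‖(M *ᵥ (x : Fin n → ℂ)) i‖ ^ 2) := by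
    rw [EuclideanSpace.norm_eq]
    rfl
  rw [h2]
  have h3 : ∑ i, ‖(M *ᵥ (x : Fin n → ℂ)) i‖ ^ 2 ≤ (∑ i, ∑ j, ‖M i j‖ ^ 2) * ‖x‖ ^ 2 := by
    rw [Finset.sum_mul]
    refine Finset.sum_le_sum fun i _ => ?_
    calc ‖(M *ᵥ (x : Fin n → ℂ)) i‖ ^ 2 ≤ (Real.sqrt (∑ j, ‖M i j‖ ^ 2) * ‖x‖) ^ 2 := by
          exact pow_le_pow_left₀ (norm_nonneg _) (key i) 2
      _ = (∑ j, ‖M i j‖ ^ 2) * ‖x‖ ^ 2 := by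
          rw [mul_pow, Real.sq_sqrt (by positivity)]
  calc Real.sqrt (∑ i, ‖(M *ᵥ (x : Fin n → ℂ)) i‖ ^ 2)
      ≤ Real.sqrt ((∑ i, ∑ j, ‖M i j‖ ^ 2) * ‖x‖ ^ 2) := Real.sqrt_le_sqrt h3
    _ = Real.sqrt (∑ i, ∑ j, ‖M i j‖ ^ 2) * ‖x‖ := by
        rw [Real.sqrt_mul (by positivity), Real.sqrt_sq (norm_nonneg _)]

lemma eval_charpoly' (A : Matrix (Fin n) (Fin n) ℂ) (μ : ℂ) :
    A.charpoly.eval μ = (μ • (1 : Matrix (Fin n) (Fin n) ℂ) - A).det := by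
  rw [Matrix.charpoly, eval_det, matPolyEquiv_charmatrix]
  congr 1
  simp only [eval_sub, eval_X, eval_C]
  congr 1
  ext i k
  simp [Matrix.scalar_apply, Matrix.smul_apply, Matrix.one_apply, Matrix.diagonal]

def diagAlgHom (n : ℕ) : (Fin n → ℂ) →ₐ[ℂ] Matrix (Fin n) (Fin n) ℂ :=
  { Matrix.diagonalRingHom (Fin n) ℂ with commutes' := fun _ => rfl }

lemma diagAlgHom_apply (d : Fin n → ℂ) : diagAlgHom n d = Matrix.diagonal d := rfl

def conjAlgHom (V : Matrix (Fin n) (Fin n) ℂ) (hV : IsUnit V.det) :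
    Matrix (Fin n) (Fin n) ℂ →ₐ[ℂ] Matrix (Fin n) (Fin n) ℂ where
  toFun M := V * M * V⁻¹
  map_one' := by
    show V * 1 * V⁻¹ = 1
    rw [mul_one, Matrix.mul_nonsing_inv _ hV]
  map_mul' M N := by
    show V * (M * N) * V⁻¹ = V * M * V⁻¹ * (V * N * V⁻¹)
    have h := Matrix.nonsing_inv_mul V hV
    have e : V * M * V⁻¹ * (V * N * V⁻¹) = V * M * (V⁻¹ * V) * (N * V⁻¹) := by
      simp only [Matrix.mul_assoc]
    rw [e, h, mul_one]
    simp only [Matrix.mul_assoc]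
  map_zero' := by simp
  map_add' M N := by simp [Matrix.mul_add, Matrix.add_mul]
  commutes' c := by
    simp only [Algebra.algebraMap_eq_smul_one, Matrix.mul_smul, mul_one,
      Matrix.smul_mul]
    rw [Matrix.mul_nonsing_inv _ hV]

lemma aeval_diagonal (d : Fin n → ℂ) (p : Polynomial ℂ) :
    Polynomial.aeval (Matrix.diagonal d) p = Matrix.diagonal (fun i => p.eval (d i)) := by
  have h1 : (Polynomial.aeval d p : Fin n → ℂ) = fun i => p.eval (d i) := by
    funext i
    have h2 := Polynomial.aeval_algHom_apply (Pi.evalAlgHom ℂ (fun _ => ℂ) i) d p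
    calc (Polynomial.aeval d p : Fin n → ℂ) i
        = (Pi.evalAlgHom ℂ (fun _ => ℂ) i) (Polynomial.aeval d p) := rfl
      _ = Polynomial.aeval (d i) p := h2.symm
      _ = p.eval (d i) := by simp [Polynomial.aeval_def, Polynomial.eval₂_eq_eval_map]
  rw [← diagAlgHom_apply d, Polynomial.aeval_algHom_apply, h1, diagAlgHom_apply]

lemma proj_formula (V : Matrix (Fin n) (Fin n) ℂ) (hV : IsUnit V.det) (lam : Fin n → ℂ)
    (j : Fin n) :
    Polynomial.aeval (V * Matrix.diagonal lam * V⁻¹)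
        (∏ k ∈ Finset.univ.erase j, (X - C (lam k)))
      = V * Matrix.diagonal (fun i => ∏ k ∈ Finset.univ.erase j, (lam i - lam k)) * V⁻¹ := by
  have h0 : V * Matrix.diagonal lam * V⁻¹ = conjAlgHom V hV (Matrix.diagonal lam) := rfl
  rw [h0, Polynomial.aeval_algHom_apply, aeval_diagonal]
  have : (fun i => eval (lam i) (∏ k ∈ Finset.univ.erase j, (X - C (lam k))))
      = fun i => ∏ k ∈ Finset.univ.erase j, (lam i - lam k) := by
    funext i; simp [Polynomial.eval_prod]
  rw [this]
  rfl

lemma matrix_norm_one (hn : 0 < n) : ‖(1 : Matrix (Fin n) (Fin n) ℂ)‖ = 1 := by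
  haveI : Nonempty (Fin n) := ⟨⟨0, hn⟩⟩
  rw [Matrix.cstar_norm_def, _root_.map_one]
  exact ContinuousLinearMap.norm_id

lemma aeval_prod_norm_le (A : Matrix (Fin n) (Fin n) ℂ) (lam : Fin n → ℂ) (j : Fin n)
    (hn : 2 ≤ n) (h : ∀ k, ‖A - lam k • 1‖ ≤ 2) :
    ‖Polynomial.aeval A (∏ k ∈ Finset.univ.erase j, (X - C (lam k)))‖ ≤ 2 ^ (n - 1) := by
  set s := Finset.univ.erase j with hs
  have hcard : s.card = n - 1 := by
    rw [hs, Finset.card_erase_of_mem (Finset.mem_univ j), Finset.card_univ, Fintype.card_fin]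
  have hsne : s.toList ≠ [] := by
    intro hnil
    have : s.card = 0 := by rw [← Finset.length_toList, hnil]; rfl
    omega
  have hp : ∏ k ∈ s, (X - C (lam k)) = (s.toList.map (fun k => X - C (lam k))).prod :=
    (Finset.prod_map_toList s _).symm
  rw [hp, map_list_prod (Polynomial.aeval A)]
  have hmap : (s.toList.map fun k => X - C (lam k)).map (Polynomial.aeval A)
      = s.toList.map (fun k => A - lam k • 1) := by
    rw [List.map_map]
    congr 1
    funext k
    simp [Algebra.algebraMap_eq_smul_one]
  rw [hmap]
  calc ‖(s.toList.map (fun k => A - lam k • 1)).prod‖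
      ≤ ((s.toList.map (fun k => A - lam k • 1)).map norm).prod :=
        List.norm_prod_le' (by simpa using hsne)
    _ = ∏ k ∈ s, ‖A - lam k • 1‖ := by rw [List.map_map]; exact Finset.prod_map_toList s _
    _ ≤ ∏ k ∈ s, 2 := Finset.prod_le_prod (fun k _ => norm_nonneg _) (fun k _ => h k)
    _ = 2 ^ (n - 1) := by rw [Finset.prod_const, hcard]

lemma row_norm_le (V : Matrix (Fin n) (Fin n) ℂ) (hV : IsUnit V.det) (j : Fin n) :
    ‖(EuclideanSpace.equiv (Fin n) ℂ).symm (V⁻¹ j)‖ *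
        ‖(EuclideanSpace.equiv (Fin n) ℂ).symm (fun i => V i j)‖
      ≤ ‖V * Matrix.diagonal (Pi.single j (1:ℂ)) * V⁻¹‖ := by
  set w : Fin n → ℂ := V⁻¹ j with hw
  set u : Fin n → ℂ := fun i => V i j with hu
  set P := V * Matrix.diagonal (Pi.single j (1:ℂ)) * V⁻¹ with hPdef
  set r : ℝ := ‖(EuclideanSpace.equiv (Fin n) ℂ).symm w‖ with hr
  have hr0 : 0 ≤ r := norm_nonneg _
  have hr2 : r ^ 2 = ∑ b, ‖w b‖ ^ 2 := by
    rw [hr, EuclideanSpace.norm_eq, Real.sq_sqrt (by positivity)]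
    rfl
  have hP : ∀ i b, P i b = u i * w b := by
    intro i b
    rw [hPdef, Matrix.mul_assoc, Matrix.mul_apply]
    rw [Finset.sum_eq_single j]
    · rw [Matrix.diagonal_mul]
      simp [hu, hw]
    · intro a _ ha
      rw [Matrix.diagonal_mul]
      simp [Pi.single_apply, ha]
    · intro habs
      exact absurd (Finset.mem_univ j) habs
  have hmv : P *ᵥ (star w) = ((r:ℂ) ^ 2) • u := by
    funext i
    show ∑ b, P i b * (star w) b = _
    have hterm : ∀ b, P i b * (star w) b = u i * (w b * (starRingEnd ℂ) (w b)) := by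
      intro b
      rw [hP i b]
      show u i * w b * (starRingEnd ℂ) (w b) = _
      ring
    rw [Finset.sum_congr rfl (fun b _ => hterm b), ← Finset.mul_sum]
    have hsum : ∑ b, w b * (starRingEnd ℂ) (w b) = ((r:ℂ)^2) := by
      have e1 : ∀ b, w b * (starRingEnd ℂ) (w b) = ((‖w b‖ ^ 2 : ℝ) : ℂ) := by
        intro b
        rw [Complex.mul_conj, Complex.normSq_eq_norm_sq]
      rw [Finset.sum_congr rfl (fun b _ => e1 b), ← Complex.ofReal_sum, ← hr2]
      push_cast
      ring
    rw [hsum]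
    simp [mul_comm]
  have h1 : ‖(EuclideanSpace.equiv (Fin n) ℂ).symm (P *ᵥ star w)‖
      = r ^ 2 * ‖(EuclideanSpace.equiv (Fin n) ℂ).symm u‖ := by
    rw [hmv]
    have e2 : (EuclideanSpace.equiv (Fin n) ℂ).symm (((r:ℂ)^2) • u)
        = ((r:ℂ)^2) • (EuclideanSpace.equiv (Fin n) ℂ).symm u := rfl
    rw [e2, norm_smul, norm_pow, Complex.norm_real, Real.norm_eq_abs, abs_of_nonneg hr0]
  have h2 : ‖(EuclideanSpace.equiv (Fin n) ℂ).symm (star w)‖ = r := by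
    rw [hr]
    simp only [EuclideanSpace.norm_eq]
    congr 1
    apply Finset.sum_congr rfl
    intro b _
    congr 1
    exact norm_star (w b)
  have h3 := Matrix.l2_opNorm_mulVec P ((EuclideanSpace.equiv (Fin n) ℂ).symm (star w))
  rw [h2] at h3
  have h4 : r ^ 2 * ‖(EuclideanSpace.equiv (Fin n) ℂ).symm u‖ ≤ ‖P‖ * r := by
    rw [← h1]
    exact h3
  rcases eq_or_lt_of_le hr0 with h0 | h0
  · rw [← h0, zero_mul]
    exact norm_nonneg _
  · nlinarith [h4, h0, norm_nonneg ((EuclideanSpace.equiv (Fin n) ℂ).symm u)]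

end AuxKappa

/-- exponential bound on κ_V in terms of the eigenvalue gap. -/
theorem kappaV_le_of_gap {n : ℕ} (hn : 2 ≤ n) (A : Matrix (Fin n) (Fin n) ℂ)
    (hA : opNorm A ≤ 1) (hgap : 0 < minGap A) :
    kappaV A ≤ ENNReal.ofReal ((n : ℝ) * 2 ^ n * minGap A ^ ((1 : ℝ) - n)) := by
  classical
  open Polynomial in
  open scoped Matrix.Norms.L2Operator in
  -- abbreviations
  set η := minGap A with hη
  have hn0 : 0 < n := by omega
  -- ## Step 1 : roots of the characteristic polynomial
  have hsplits : A.charpoly.Splits := IsAlgClosed.splits _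
  have hdeg : A.charpoly.natDegree = n := by
    rw [Matrix.charpoly_natDegree_eq_dim, Fintype.card_fin]
  have hcard : Multiset.card A.charpoly.roots = n := by
    have h := Polynomial.splits_iff_card_roots.mp hsplits
    rw [hdeg] at h
    exact h
  -- the gap set is bounded below by 0
  have hbdd : BddBelow {d | ∃ a ∈ A.charpoly.roots, ∃ b ∈ A.charpoly.roots.erase a,
      d = ‖a - b‖} := by
    refine ⟨0, fun d hd => ?_⟩
    obtain ⟨a, _, b, _, rfl⟩ := hd
    exact norm_nonneg _
  -- roots are distinct
  have hnodup : A.charpoly.roots.Nodup := by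
    by_contra hnd
    rw [Multiset.nodup_iff_count_le_one] at hnd
    push_neg at hnd
    obtain ⟨a, ha⟩ := hnd
    have hmem : a ∈ A.charpoly.roots := by
      rw [← Multiset.count_pos]; omega
    have hmem' : a ∈ A.charpoly.roots.erase a := by
      rw [← Multiset.count_pos, Multiset.count_erase_self]; omega
    have h0 : (0:ℝ) ∈ {d | ∃ a ∈ A.charpoly.roots, ∃ b ∈ A.charpoly.roots.erase a,
        d = ‖a - b‖} := ⟨a, hmem, a, hmem', by simp⟩
    have h1 : minGap A ≤ 0 := csInf_le hbdd h0
    have h2 : 0 < minGap A := hgap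
    linarith
  -- enumerate the roots
  have hlen : A.charpoly.roots.toList.length = n := by
    rw [Multiset.length_toList, hcard]
  set lam : Fin n → ℂ := fun i => A.charpoly.roots.toList.get (Fin.cast hlen.symm i) with hlam
  have hlaminj : Function.Injective lam := by
    intro i j hij
    have hnl : A.charpoly.roots.toList.Nodup :=
      Multiset.coe_nodup.mp (by rwa [Multiset.coe_toList])
    have := (List.nodup_iff_injective_get).mp hnl hij
    exact Fin.cast_injective _ (by exact this)
  have hlammem : ∀ i, lam i ∈ A.charpoly.roots := by
    intro i
    rw [← Multiset.mem_toList]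
    exact List.get_mem _ _
  have hgapij : ∀ i j : Fin n, i ≠ j → η ≤ ‖lam i - lam j‖ := by
    intro i j hij
    have hne : lam j ≠ lam i := fun h => hij (hlaminj h).symm
    have hmem' : lam j ∈ A.charpoly.roots.erase (lam i) :=
      Multiset.mem_erase_of_ne hne |>.mpr (hlammem j)
    exact csInf_le hbdd ⟨lam i, hlammem i, lam j, hmem', rfl⟩
  -- ## Step 2 : eigenvectors
  have hdetz : ∀ i : Fin n, ((lam i) • (1 : Matrix (Fin n) (Fin n) ℂ) - A).det = 0 := by
    intro i
    have := (Polynomial.mem_roots'.mp (hlammem i)).2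
    rw [Polynomial.IsRoot, eval_charpoly'] at this
    exact this
  have hex : ∀ i : Fin n, ∃ v : Fin n → ℂ,
      ‖(EuclideanSpace.equiv (Fin n) ℂ).symm v‖ = 1 ∧ A *ᵥ v = lam i • v := by
    intro i
    obtain ⟨v, hv0, hv⟩ := (Matrix.exists_mulVec_eq_zero_iff).mpr (hdetz i)
    have hv' : A *ᵥ v = lam i • v := by
      rw [Matrix.sub_mulVec, Matrix.smul_mulVec, Matrix.one_mulVec, sub_eq_zero] at hv
      exact hv.symm
    set c : ℝ := ‖(EuclideanSpace.equiv (Fin n) ℂ).symm v‖ with hc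
    have hcpos : 0 < c := by
      rw [hc, norm_pos_iff]
      simpa using hv0
    refine ⟨(c⁻¹ : ℂ) • v, ?_, ?_⟩
    · have : (EuclideanSpace.equiv (Fin n) ℂ).symm ((c⁻¹ : ℂ) • v)
          = (c⁻¹ : ℂ) • (EuclideanSpace.equiv (Fin n) ℂ).symm v := rfl
      rw [this, norm_smul, ← Complex.ofReal_inv, Complex.norm_real, Real.norm_eq_abs,
        abs_of_pos (inv_pos.mpr hcpos), ← hc, inv_mul_cancel₀ (ne_of_gt hcpos)]
    · rw [Matrix.mulVec_smul, hv', smul_comm]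
  choose u hu1 hu2 using hex
  have hune : ∀ i, u i ≠ 0 := by
    intro i h
    have := hu1 i
    rw [h] at this
    simp at this
  -- the matrix of eigenvectors
  set V : Matrix (Fin n) (Fin n) ℂ := Matrix.of (fun i j => u j i) with hVdef
  have hVcol : ∀ j, (fun i => V i j) = u j := fun j => rfl
  have hVt : ∀ i, Vᵀ i = u i := fun i => rfl
  have hVunit : IsUnit V := by
    rw [← Matrix.linearIndependent_cols_iff_isUnit]
    have hli : LinearIndependent ℂ u := by
      apply Module.End.eigenvectors_linearIndependent' (Matrix.mulVecLin A) lam hlaminj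
      intro i
      constructor
      · rw [Module.End.mem_eigenspace_iff, Matrix.mulVecLin_apply]
        exact hu2 i
      · exact hune i
    exact hli
  have hVdet : IsUnit V.det := (Matrix.isUnit_iff_isUnit_det V).mp hVunit
  set D := Matrix.diagonal lam with hD
  have hAV : A * V = V * D := by
    ext i j
    rw [Matrix.mul_apply, hD, Matrix.mul_diagonal]
    have : ∑ k, A i k * V k j = (A *ᵥ u j) i := rfl
    rw [this, hu2 j]
    show lam j * u j i = V i j * lam j
    rw [mul_comm]
    rfl
  have hAfact : A = V * D * V⁻¹ := by
    calc A = A * (V * V⁻¹) := by rw [Matrix.mul_nonsing_inv _ hVdet, mul_one]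
      _ = A * V * V⁻¹ := by rw [Matrix.mul_assoc]
      _ = V * D * V⁻¹ := by rw [hAV]
  -- ## Step 3 : eigenvalue bounds
  have hAnorm : ‖A‖ ≤ 1 := by rw [← opNorm_eq_norm]; exact hA
  have hlambound : ∀ i, ‖lam i‖ ≤ 1 := by
    intro i
    have h1 : ‖(EuclideanSpace.equiv (Fin n) ℂ).symm (A *ᵥ u i)‖ ≤ ‖A‖ * 1 := by
      have := Matrix.l2_opNorm_mulVec A ((EuclideanSpace.equiv (Fin n) ℂ).symm (u i))
      rw [hu1 i] at this
      exact this
    rw [hu2 i] at h1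
    have h2 : (EuclideanSpace.equiv (Fin n) ℂ).symm (lam i • u i)
        = lam i • (EuclideanSpace.equiv (Fin n) ℂ).symm (u i) := rfl
    rw [h2, norm_smul, hu1 i, mul_one] at h1
    calc ‖lam i‖ ≤ ‖A‖ * 1 := h1
      _ ≤ 1 := by rw [mul_one]; exact hAnorm
  have hfac : ∀ k, ‖A - lam k • (1 : Matrix (Fin n) (Fin n) ℂ)‖ ≤ 2 := by
    intro k
    calc ‖A - lam k • (1 : Matrix (Fin n) (Fin n) ℂ)‖
        ≤ ‖A‖ + ‖lam k • (1 : Matrix (Fin n) (Fin n) ℂ)‖ := norm_sub_le _ _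
      _ = ‖A‖ + ‖lam k‖ * ‖(1 : Matrix (Fin n) (Fin n) ℂ)‖ := by rw [norm_smul]
      _ ≤ 1 + 1 * 1 := by
          have := matrix_norm_one (n := n) hn0
          rw [this]
          have := hlambound k
          gcongr
      _ = 2 := by norm_num
  -- ## Step 4 : row bounds for V⁻¹
  set K : ℝ := 2 ^ (n - 1) * (η ^ (n - 1))⁻¹ with hK
  have hηpow : 0 < η ^ (n - 1) := pow_pos hgap _
  have hK0 : 0 ≤ K := by positivity
  have hrowbound : ∀ j, ‖(EuclideanSpace.equiv (Fin n) ℂ).symm (V⁻¹ j)‖ ≤ K := by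
    intro j
    set c : ℂ := ∏ k ∈ Finset.univ.erase j, (lam j - lam k) with hc
    set P := V * Matrix.diagonal (Pi.single j (1:ℂ)) * V⁻¹ with hPdef
    have habsc : η ^ (n - 1) ≤ ‖c‖ := by
      rw [hc, norm_prod]
      have hcarde : (Finset.univ.erase j).card = n - 1 := by
        rw [Finset.card_erase_of_mem (Finset.mem_univ j), Finset.card_univ, Fintype.card_fin]
      calc η ^ (n-1) = ∏ _k ∈ Finset.univ.erase j, η := by rw [Finset.prod_const, hcarde]
        _ ≤ ∏ k ∈ Finset.univ.erase j, ‖lam j - lam k‖ := by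
            refine Finset.prod_le_prod (fun _ _ => le_of_lt hgap) (fun k hk => ?_)
            exact hgapij j k (fun h => (Finset.mem_erase.mp hk).1 h.symm)
    have haev : Polynomial.aeval A (∏ k ∈ Finset.univ.erase j, (X - C (lam k))) = c • P := by
      rw [hAfact, proj_formula V hVdet lam j]
      have hfun : (fun i => ∏ k ∈ Finset.univ.erase j, (lam i - lam k))
          = c • (Pi.single j (1:ℂ) : Fin n → ℂ) := by
        funext i
        by_cases hij : i = j
        · subst hij
          simp [hc, Pi.smul_apply, Pi.single_eq_same, smul_eq_mul, mul_one]
        · have hzero : ∏ k ∈ Finset.univ.erase j, (lam i - lam k) = 0 := by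
            apply Finset.prod_eq_zero (Finset.mem_erase.mpr ⟨hij, Finset.mem_univ i⟩)
            ring
          rw [hzero]
          simp [Pi.single_apply, hij]
      rw [hfun, Matrix.diagonal_smul, Matrix.mul_smul, Matrix.smul_mul]
    have hPnorm : ‖P‖ ≤ K := by
      have hb : ‖c • P‖ ≤ 2 ^ (n - 1) := by
        rw [← haev]
        exact aeval_prod_norm_le A lam j hn hfac
      rw [norm_smul] at hb
      have hcabs : ‖c‖ = ‖c‖ := rfl
      rw [hK, ← div_eq_mul_inv, le_div_iff₀ hηpow]
      calc ‖P‖ * η ^ (n-1) ≤ ‖P‖ * ‖c‖ := by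
            have : (0:ℝ) ≤ ‖P‖ := norm_nonneg _
            gcongr
        _ = ‖c‖ * ‖P‖ := by rw [hcabs, mul_comm]
        _ ≤ 2 ^ (n-1) := hb
    calc ‖(EuclideanSpace.equiv (Fin n) ℂ).symm (V⁻¹ j)‖
        = ‖(EuclideanSpace.equiv (Fin n) ℂ).symm (V⁻¹ j)‖ *
            ‖(EuclideanSpace.equiv (Fin n) ℂ).symm (fun i => V i j)‖ := by
          rw [hVcol j, hu1 j, mul_one]
      _ ≤ ‖P‖ := row_norm_le V hVdet j
      _ ≤ K := hPnorm
  -- ## Step 5 : Frobenius bounds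
  have hVnorm : ‖V‖ ≤ Real.sqrt n := by
    refine le_trans (opNorm_le_frob V) ?_
    apply Real.sqrt_le_sqrt
    rw [Finset.sum_comm]
    have : ∀ j : Fin n, ∑ i, ‖V i j‖ ^ 2 = 1 := by
      intro j
      have h1 := hu1 j
      rw [EuclideanSpace.norm_eq] at h1
      have h2 : ∑ i, ‖u j i‖ ^ 2 = 1 := by
        have := Real.sqrt_eq_one.mp h1
        exact this
      rw [← h2]
      rfl
    rw [Finset.sum_congr rfl (fun j _ => this j), Finset.sum_const, Finset.card_univ,
      Fintype.card_fin, nsmul_eq_mul, mul_one]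
  have hVinvnorm : ‖V⁻¹‖ ≤ Real.sqrt n * K := by
    refine le_trans (opNorm_le_frob V⁻¹) ?_
    have hbnd : ∑ i, ∑ j, ‖V⁻¹ i j‖ ^ 2 ≤ (n : ℝ) * K ^ 2 := by
      have : ∀ i : Fin n, ∑ j, ‖V⁻¹ i j‖ ^ 2 ≤ K ^ 2 := by
        intro i
        have h1 := hrowbound i
        have h2 : ‖(EuclideanSpace.equiv (Fin n) ℂ).symm (V⁻¹ i)‖ ^ 2 = ∑ j, ‖V⁻¹ i j‖ ^ 2 := by
          rw [EuclideanSpace.norm_eq, Real.sq_sqrt (by positivity)]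
          rfl
        rw [← h2]
        exact pow_le_pow_left₀ (norm_nonneg _) h1 2
      calc ∑ i, ∑ j, ‖V⁻¹ i j‖ ^ 2 ≤ ∑ _i : Fin n, K ^ 2 :=
            Finset.sum_le_sum (fun i _ => this i)
        _ = (n : ℝ) * K ^ 2 := by
            rw [Finset.sum_const, Finset.card_univ, Fintype.card_fin, nsmul_eq_mul]
    calc Real.sqrt (∑ i, ∑ j, ‖V⁻¹ i j‖ ^ 2) ≤ Real.sqrt ((n:ℝ) * K ^ 2) :=
          Real.sqrt_le_sqrt hbnd
      _ = Real.sqrt n * K := by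
          rw [Real.sqrt_mul (by positivity), Real.sqrt_sq hK0]
  -- ## Step 6 : conclusion
  have hfinal : opNorm V * opNorm V⁻¹ ≤ (n : ℝ) * 2 ^ n * η ^ ((1:ℝ) - n) := by
    have hrpow : η ^ ((1:ℝ) - n) = (η ^ (n-1))⁻¹ := by
      have h1 : ((1:ℝ) - n) = -(((n - 1 : ℕ)) : ℝ) := by
        push_cast [Nat.cast_sub (by omega : 1 ≤ n)]
        ring
      rw [h1, Real.rpow_neg hgap.le, Real.rpow_natCast]
    have h2 : opNorm V * opNorm V⁻¹ ≤ Real.sqrt n * (Real.sqrt n * K) := by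
      rw [opNorm_eq_norm, opNorm_eq_norm]
      exact mul_le_mul hVnorm hVinvnorm (norm_nonneg _) (Real.sqrt_nonneg _)
    have h3 : Real.sqrt n * (Real.sqrt n * K) = (n:ℝ) * K := by
      rw [← mul_assoc, Real.mul_self_sqrt (by positivity)]
    have h4 : (n:ℝ) * K ≤ (n : ℝ) * 2 ^ n * η ^ ((1:ℝ) - n) := by
      rw [hrpow, hK, mul_assoc]
      have : (2:ℝ) ^ (n-1) ≤ 2 ^ n := by
        apply pow_le_pow_right₀ (by norm_num)
        omega
      have hinv : (0:ℝ) ≤ (η ^ (n-1))⁻¹ := by positivity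
      have hn' : (0:ℝ) ≤ (n:ℝ) := by positivity
      gcongr
    linarith [h2, h3 ▸ h2, h4]
  have hkv : kappaV A ≤ ENNReal.ofReal (opNorm V * opNorm V⁻¹) := by
    rw [kappaV]
    refine iInf_le_of_le V (iInf_le_of_le D ?_)
    refine iInf_le_of_le hVunit (iInf_le_of_le ?_ (iInf_le_of_le hAfact le_rfl))
    rw [hD]
    exact Matrix.isDiag_diagonal lam
  refine le_trans hkv ?_
  exact ENNReal.ofReal_le_ofReal hfinal

end
end

section
/- Suppose A ∈ ℂ^{n×n} has n distinct eigenvalues λ_1,…,λ_n, ordered so that κ(λ_1) = max_j κ(λ_j). Then for every ε > 0, the ε-pseudospectrum Λ_ε(A) contains the closed disk centered at λ_1 of radius ½·min( η(A)/n , κ(λ_1)·ε ). -/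
open MeasureTheory Matrix
open scoped ENNReal

noncomputable section

def ev {n : ℕ} (v : Fin n → ℂ) : EuclideanSpace ℂ (Fin n) :=
  (WithLp.equiv 2 (Fin n → ℂ)).symm v

lemma ev_norm {n : ℕ} (v : Fin n → ℂ) :
    ‖ev v‖ = Real.sqrt (∑ i, ‖v i‖ ^ 2) := by
  rw [EuclideanSpace.norm_eq]
  simp [ev]

lemma l2norm_eq {n : ℕ} (v : Fin n → ℂ) : l2norm v = ‖ev v‖ := by
  rw [ev_norm, l2norm]

lemma ev_ne_zero {n : ℕ} {v : Fin n → ℂ} (hv : v ≠ 0) : ev v ≠ 0 := by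
  intro h
  exact hv (by simpa [ev] using congrArg (WithLp.equiv 2 (Fin n → ℂ)) h)

lemma sLow_nonneg {n : ℕ} (M : Matrix (Fin n) (Fin n) ℂ) : 0 ≤ sLow M 0 := by
  unfold sLow
  split
  · exact Real.sqrt_nonneg _
  · exact le_refl 0

lemma sLow_rayleigh {n : ℕ} (M : Matrix (Fin n) (Fin n) ℂ) (x : Fin n → ℂ) :
    sLow M 0 * ‖ev x‖ ≤ ‖ev (M *ᵥ x)‖ := by
  by_cases hn : 0 < n
  · have hH := Matrix.isHermitian_conjTranspose_mul_self M
    set μ : Fin n → ℝ := hH.eigenvalues with hμ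
    have hsq : 0 ≤ μ (Tuple.sort μ ⟨0, hn⟩) :=
      Matrix.eigenvalues_conjTranspose_mul_self_nonneg M _
    have hsLow : sLow M 0 = Real.sqrt (μ (Tuple.sort μ ⟨0, hn⟩)) := by
      unfold sLow; rw [dif_pos hn]; rfl
    have hmin : ∀ i, μ (Tuple.sort μ ⟨0, hn⟩) ≤ μ i := by
      intro i
      obtain ⟨k, hk⟩ := (Tuple.sort μ).surjective i
      rw [← hk]
      exact Tuple.monotone_sort μ (by simp [Fin.le_def])
    set b := hH.eigenvectorBasis with hb
    set y := ev x with hy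
    set c : Fin n → ℂ := fun i => inner (𝕜 := ℂ) ((b i : EuclideanSpace ℂ (Fin n))) y with hc
    have hynorm : ‖y‖ ^ 2 = ∑ i, ‖c i‖ ^ 2 := by
      have h1 : ‖y‖ = ‖b.repr y‖ := (b.repr.norm_map y).symm
      rw [h1, EuclideanSpace.norm_eq, Real.sq_sqrt (by positivity)]
      exact Finset.sum_congr rfl fun i _ => by rw [b.repr_apply_apply]
    have hT : ∀ i, Matrix.toEuclideanLin (𝕜 := ℂ) (Mᴴ * M) (b i) = ((μ i : ℝ) : ℂ) • b i := by
      intro i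
      have h2 := hH.mulVec_eigenvectorBasis i
      have h3 : Matrix.toEuclideanLin (𝕜 := ℂ) (Mᴴ * M) (b i)
          = (WithLp.equiv 2 (Fin n → ℂ)).symm ((Mᴴ * M) *ᵥ ⇑(b i)) := rfl
      rw [h3, h2, WithLp.equiv_symm_apply, WithLp.toLp_smul, RCLike.real_smul_eq_coe_smul (K := ℂ)]
      rfl
    have hyexp : y = ∑ i, c i • (b i : EuclideanSpace ℂ (Fin n)) := (b.sum_repr' y).symm
    have hHy : Matrix.toEuclideanLin (𝕜 := ℂ) (Mᴴ * M) y
        = ∑ i, (c i * ((μ i : ℝ) : ℂ)) • (b i : EuclideanSpace ℂ (Fin n)) := by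
      conv_lhs => rw [hyexp]
      rw [map_sum]
      refine Finset.sum_congr rfl fun i _ => ?_
      rw [_root_.map_smul, hT i, smul_smul]
    have hinner : inner (𝕜 := ℂ) y (Matrix.toEuclideanLin (𝕜 := ℂ) (Mᴴ * M) y)
        = ∑ i, ((μ i : ℝ) : ℂ) * ((‖c i‖ : ℝ) : ℂ) ^ 2 := by
      rw [hHy, inner_sum]
      refine Finset.sum_congr rfl fun i _ => ?_
      rw [inner_smul_right]
      have h4 : inner (𝕜 := ℂ) y ((b i : EuclideanSpace ℂ (Fin n))) = starRingEnd ℂ (c i) := by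
        rw [hc, ← inner_conj_symm]
      rw [h4]
      have h5 : c i * starRingEnd ℂ (c i) = ((‖c i‖ : ℝ) : ℂ) ^ 2 := by
        rw [Complex.mul_conj]
        rw [Complex.normSq_eq_norm_sq]
        push_cast
        rfl
      rw [mul_comm (c i) (((μ i : ℝ)) : ℂ), mul_assoc, h5]
    have hMx : ev (M *ᵥ x) = Matrix.toEuclideanLin (𝕜 := ℂ) M y := rfl
    have hadj : inner (𝕜 := ℂ) y (Matrix.toEuclideanLin (𝕜 := ℂ) (Mᴴ * M) y)
        = inner (𝕜 := ℂ) (Matrix.toEuclideanLin (𝕜 := ℂ) M y) (Matrix.toEuclideanLin (𝕜 := ℂ) M y) := by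
      have h2 : Matrix.toEuclideanLin (𝕜 := ℂ) (Mᴴ * M) y
          = Matrix.toEuclideanLin (𝕜 := ℂ) Mᴴ (Matrix.toEuclideanLin (𝕜 := ℂ) M y) := by
        simp only [Matrix.toEuclideanLin_apply, Equiv.apply_symm_apply, Matrix.mulVec_mulVec]
      rw [h2, Matrix.toEuclideanLin_conjTranspose_eq_adjoint, LinearMap.adjoint_inner_right]
    have h7 : inner (𝕜 := ℂ) (ev (M *ᵥ x)) (ev (M *ᵥ x))
        = ∑ i, ((μ i : ℝ) : ℂ) * ((‖c i‖ : ℝ) : ℂ) ^ 2 := by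
      rw [hMx, ← hadj, hinner]
    have hreal : ‖ev (M *ᵥ x)‖ ^ 2 = ∑ i, μ i * ‖c i‖ ^ 2 := by
      have h8 := inner_self_eq_norm_sq (𝕜 := ℂ) (ev (M *ᵥ x))
      rw [← h8, h7]
      simp only [← Complex.ofReal_pow, ← Complex.ofReal_mul]
      rw [← Complex.ofReal_sum]
      simp [← Complex.ofReal_pow]
    have hfin : (sLow M 0 * ‖y‖) ^ 2 ≤ ‖ev (M *ᵥ x)‖ ^ 2 := by
      rw [mul_pow, hsLow, Real.sq_sqrt hsq, hreal, hynorm, Finset.mul_sum]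
      exact Finset.sum_le_sum fun i _ => mul_le_mul_of_nonneg_right (hmin i) (by positivity)
    have h1 : 0 ≤ sLow M 0 * ‖y‖ := mul_nonneg (sLow_nonneg M) (norm_nonneg _)
    nlinarith [norm_nonneg (ev (M *ᵥ x))]
  · have : sLow M 0 = 0 := by unfold sLow; rw [dif_neg hn]
    rw [this, zero_mul]
    exact norm_nonneg _

open Polynomial in
lemma my_charpoly_conj {n : ℕ} (V D : Matrix (Fin n) (Fin n) ℂ) (hV : IsUnit V) :
    (V * D * V⁻¹).charpoly = D.charpoly := by
  have hdet : IsUnit V.det := (Matrix.isUnit_iff_isUnit_det V).mp hV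
  have h1 : V * V⁻¹ = 1 := Matrix.mul_nonsing_inv V hdet
  set f := RingHom.mapMatrix (m := Fin n) (Polynomial.C : ℂ →+* ℂ[X]) with hf
  have hfV : f V * f V⁻¹ = 1 := by rw [← _root_.map_mul, h1, _root_.map_one]
  have hcomm : ∀ B : Matrix (Fin n) (Fin n) ℂ[X],
      Matrix.scalar (Fin n) (X : ℂ[X]) * B = B * Matrix.scalar (Fin n) (X : ℂ[X]) := by
    intro B
    exact (Matrix.scalar_commute (n := Fin n) (X : ℂ[X]) (fun r => Commute.all _ _) B)
  have hcm : Matrix.charmatrix (V * D * V⁻¹) = f V * Matrix.charmatrix D * f V⁻¹ := by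
    rw [Matrix.charmatrix, Matrix.charmatrix]
    rw [mul_sub, sub_mul]
    congr 1
    · rw [← hcomm (f V), mul_assoc, hfV, mul_one]
    · rw [_root_.map_mul, _root_.map_mul]
  rw [Matrix.charpoly, Matrix.charpoly, hcm, Matrix.det_mul, Matrix.det_mul]
  have hd : (f V).det * (f V⁻¹).det = 1 := by rw [← Matrix.det_mul, hfV, Matrix.det_one]
  calc (f V).det * (Matrix.charmatrix D).det * (f V⁻¹).det
      = (Matrix.charmatrix D).det * ((f V).det * (f V⁻¹).det) := by ring
    _ = (Matrix.charmatrix D).det := by rw [hd, mul_one]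

open Polynomial in
lemma my_roots_charpoly_diagonal {n : ℕ} (lam : Fin n → ℂ) :
    (Matrix.diagonal lam).charpoly.roots = Multiset.map lam Finset.univ.val := by
  have hcm : Matrix.charmatrix (Matrix.diagonal lam)
      = Matrix.diagonal (fun i => (X : ℂ[X]) - Polynomial.C (lam i)) := by
    ext i j
    by_cases h : i = j
    · subst h
      rw [Matrix.charmatrix_apply_eq, Matrix.diagonal_apply_eq, Matrix.diagonal_apply_eq]
    · rw [Matrix.charmatrix_apply_ne _ _ _ h, Matrix.diagonal_apply_ne _ h,
        Matrix.diagonal_apply_ne _ h, map_zero, neg_zero]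
  rw [Matrix.charpoly, hcm, Matrix.det_diagonal]
  have h2 : ∏ i, ((X : ℂ[X]) - Polynomial.C (lam i))
      = (Multiset.map (fun a => (X : ℂ[X]) - Polynomial.C a) (Multiset.map lam Finset.univ.val)).prod := by
    rw [Multiset.map_map]
    rfl
  rw [h2, Polynomial.roots_multiset_prod_X_sub_C]


set_option maxHeartbeats 1000000 in
/-- disks inside the pseudospectrum. -/
theorem closedBall_subset_pspec {n : ℕ} (hn : 0 < n)
    (A V : Matrix (Fin n) (Fin n) ℂ) (lam : Fin n → ℂ)
    (hinj : Function.Injective lam) (hV : IsUnit V)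
    (hdiag : A = V * Matrix.diagonal lam * V⁻¹)
    (hmax : ∀ j, evCond V j ≤ evCond V ⟨0, hn⟩)
    (ε : ℝ) (hε : 0 < ε) :
    Metric.closedBall (lam ⟨0, hn⟩)
        (1 / 2 * min (minGap A / n) (evCond V ⟨0, hn⟩ * ε)) ⊆ pspec ε A := by
  intro z hz
  have hn' : (1:ℝ) ≤ n := by exact_mod_cast hn
  have hNpos : (0:ℝ) < n := by exact_mod_cast hn
  set j0 : Fin n := ⟨0, hn⟩ with hj0
  rw [Metric.mem_closedBall, Complex.dist_eq] at hz
  simp only [pspec, Set.mem_setOf_eq]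
  set M := z • (1 : Matrix (Fin n) (Fin n) ℂ) - A with hM
  have hdet : IsUnit V.det := (Matrix.isUnit_iff_isUnit_det V).mp hV
  have hVV : V * V⁻¹ = 1 := Matrix.mul_nonsing_inv V hdet
  have hVV' : V⁻¹ * V = 1 := Matrix.nonsing_inv_mul V hdet
  set a : Fin n → ℂ := fun i => V i j0 with ha
  set bb : Fin n → ℂ := fun k => V⁻¹ j0 k with hbb
  have hsum1 : ∑ k, bb k * a k = 1 := by
    have hone : ((V⁻¹ * V) j0 j0) = 1 := by rw [hVV']; simp [Matrix.one_apply]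
    rw [Matrix.mul_apply] at hone
    exact hone
  have ha0 : a ≠ 0 := by
    intro h; rw [h] at hsum1; simp at hsum1
  have hb0 : bb ≠ 0 := by
    intro h; rw [h] at hsum1; simp at hsum1
  have haN : 0 < ‖ev a‖ := norm_pos_iff.mpr (ev_ne_zero ha0)
  have hbN : 0 < ‖ev bb‖ := norm_pos_iff.mpr (ev_ne_zero hb0)
  have hκ : evCond V j0 = ‖ev a‖ * ‖ev bb‖ := by
    rw [evCond, l2norm_eq, l2norm_eq]
  have hκpos : 0 < evCond V j0 := by rw [hκ]; positivity
  have hAa : A *ᵥ a = lam j0 • a := by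
    have h1 : a = V *ᵥ Pi.single j0 1 := by
      rw [Matrix.mulVec_single]
      funext i
      simp [ha]
    rw [hdiag, h1, Matrix.mulVec_mulVec, mul_assoc (V * Matrix.diagonal lam),
      hVV', mul_one, ← Matrix.mulVec_mulVec, Matrix.diagonal_mulVec_single,
      Matrix.mulVec_single, Matrix.mulVec_single]
    funext i
    simp only [Pi.smul_apply, smul_eq_mul, MulOpposite.smul_eq_mul_unop, MulOpposite.unop_op]
    ring
  rcases eq_or_ne z (lam j0) with hzeq | hzeq
  · have hMa : M *ᵥ a = 0 := by
      rw [hM, Matrix.sub_mulVec, hAa, hzeq, Matrix.smul_mulVec, Matrix.one_mulVec, sub_self]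
    have h := sLow_rayleigh M a
    rw [hMa] at h
    have h0 : ‖ev (0 : Fin n → ℂ)‖ = 0 := by
      have : ev (0 : Fin n → ℂ) = 0 := by simp [ev]
      rw [this, norm_zero]
    rw [h0] at h
    have hs := sLow_nonneg M
    nlinarith [haN]
  · set r := ‖z - lam j0‖ with hr
    have hrpos : 0 < r := by rw [hr]; exact norm_pos_iff.mpr (sub_ne_zero.mpr hzeq)
    set κ1 := evCond V j0 with hκ1
    have hz2 : r ≤ 1/2 * min (minGap A / n) (κ1 * ε) := hz
    have hηr : 2 * (n:ℝ) * r ≤ minGap A := by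
      have h1 : r ≤ 1/2 * (minGap A / n) :=
        le_trans hz2 (mul_le_mul_of_nonneg_left (min_le_left _ _) (by norm_num))
      have h2 := mul_le_mul_of_nonneg_left h1 (le_of_lt (by positivity : (0:ℝ) < 2 * n))
      have h3 : 2 * (n:ℝ) * (1/2 * (minGap A / n)) = minGap A := by field_simp
      rw [h3] at h2
      exact h2
    have hκε : 2 * r ≤ κ1 * ε := by
      have h1 : r ≤ 1/2 * (κ1 * ε) :=
        le_trans hz2 (mul_le_mul_of_nonneg_left (min_le_right _ _) (by norm_num))
      linarith
    have hroots : A.charpoly.roots = Multiset.map lam Finset.univ.val := by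
      rw [hdiag, my_charpoly_conj _ _ hV, my_roots_charpoly_diagonal]
    have hgapj : ∀ j, j ≠ j0 → minGap A ≤ ‖lam j0 - lam j‖ := by
      intro j hj
      apply csInf_le
      · refine ⟨0, ?_⟩
        rintro d ⟨p, _, q, _, rfl⟩
        positivity
      · refine ⟨lam j0, ?_, lam j, ?_, rfl⟩
        · rw [hroots]
          exact Multiset.mem_map_of_mem _ (Finset.mem_val.mpr (Finset.mem_univ j0))
        · rw [hroots]
          rw [Multiset.mem_erase_of_ne (fun h => hj (hinj h))]
          exact Multiset.mem_map_of_mem _ (Finset.mem_val.mpr (Finset.mem_univ j))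
    have hgap : ∀ j, j ≠ j0 → (2 * (n:ℝ) - 1) * r ≤ ‖z - lam j‖ := by
      intro j hj
      have h1 := hgapj j hj
      have h2 : ‖lam j0 - lam j‖ ≤ r + ‖z - lam j‖ := by
        have h3 : lam j0 - lam j = (lam j0 - z) + (z - lam j) := by ring
        rw [h3]
        refine le_trans (norm_add_le _ _) ?_
        have h4 : ‖lam j0 - z‖ = r := by rw [hr, norm_sub_rev]
        rw [h4]
      linarith
    have hzj : ∀ j, z - lam j ≠ 0 := by
      intro j
      rcases eq_or_ne j j0 with h | h
      · rw [h]; exact sub_ne_zero.mpr hzeq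
      · intro h3
        have h1 := hgap j h
        rw [h3] at h1
        simp only [norm_zero] at h1
        nlinarith
    set u : Fin n → ℂ := fun k => starRingEnd ℂ (bb k) with hu
    set w : Fin n → ℂ := V⁻¹ *ᵥ u with hw
    set cc : Fin n → ℂ := fun j => (z - lam j)⁻¹ * w j with hcc
    set x : Fin n → ℂ := V *ᵥ cc with hx
    have hMxu : M *ᵥ x = u := by
      have h1 : A *ᵥ x = V *ᵥ (Matrix.diagonal lam *ᵥ cc) := by
        rw [hdiag, hx, Matrix.mulVec_mulVec, mul_assoc (V * Matrix.diagonal lam), hVV', mul_one,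
          ← Matrix.mulVec_mulVec]
      rw [hM, Matrix.sub_mulVec, Matrix.smul_mulVec, Matrix.one_mulVec, h1]
      have h2 : z • x - V *ᵥ (Matrix.diagonal lam *ᵥ cc) = V *ᵥ (z • cc - Matrix.diagonal lam *ᵥ cc) := by
        rw [Matrix.mulVec_sub, Matrix.mulVec_smul, hx]
      rw [h2]
      have h3 : z • cc - Matrix.diagonal lam *ᵥ cc = w := by
        funext j
        simp only [Pi.sub_apply, Pi.smul_apply, Matrix.mulVec_diagonal, smul_eq_mul, hcc]
        rw [← sub_mul, ← mul_assoc, mul_inv_cancel₀ (hzj j), one_mul]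
      rw [h3, hw, Matrix.mulVec_mulVec, hVV, Matrix.one_mulVec]
    set rowv : Fin n → (Fin n → ℂ) := fun j => fun k => V⁻¹ j k with hrowv
    set colv : Fin n → (Fin n → ℂ) := fun j => fun i => V i j with hcolv
    have hwj : ∀ j, w j = inner (𝕜 := ℂ) (ev bb) (ev (rowv j)) := by
      intro j
      rw [hw]
      simp only [Matrix.mulVec, dotProduct, PiLp.inner_apply, RCLike.inner_apply, hu]
      refine Finset.sum_congr rfl fun k _ => ?_
      rfl
    have hwj0 : w j0 = ((‖ev bb‖ : ℝ) : ℂ) ^ 2 := by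
      rw [hwj j0]
      have hbe : ev (rowv j0) = ev bb := rfl
      rw [hbe, inner_self_eq_norm_sq_to_K]
      rfl
    have hwb : ∀ j, ‖w j‖ ≤ ‖ev bb‖ * ‖ev (rowv j)‖ := by
      intro j
      rw [hwj j]
      exact norm_inner_le_norm _ _
    have hxsum : ev x = ∑ j, cc j • ev (colv j) := by
      have h1 : x = ∑ j, cc j • colv j := by
        funext i
        rw [hx]
        simp only [Matrix.mulVec, dotProduct, Finset.sum_apply, Pi.smul_apply, hcolv,
          smul_eq_mul]
        exact Finset.sum_congr rfl fun j _ => mul_comm _ _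
      have h2 : ev x = (WithLp.linearEquiv 2 ℂ (Fin n → ℂ)).symm x := rfl
      rw [h2, h1, map_sum]
      simp only [_root_.map_smul]
      rfl
    have hcj0 : ‖cc j0 • ev (colv j0)‖ = r⁻¹ * ‖ev bb‖^2 * ‖ev a‖ := by
      rw [norm_smul]
      have h1 : ‖cc j0‖ = r⁻¹ * ‖ev bb‖^2 := by
        rw [hcc]
        simp only [norm_mul, norm_inv, hwj0, norm_pow, Complex.norm_real, Real.norm_eq_abs]
        rw [abs_of_nonneg (norm_nonneg _)]
      have h2 : ev (colv j0) = ev a := rfl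
      rw [h1, h2]
    have hterm : ∀ j ∈ Finset.univ.erase j0,
        ‖cc j • ev (colv j)‖ ≤ ((2*(n:ℝ)-1)*r)⁻¹ * (‖ev bb‖ * κ1) := by
      intro j hj
      have hj' : j ≠ j0 := Finset.ne_of_mem_erase hj
      rw [norm_smul]
      have habs : 0 < (2*(n:ℝ)-1)*r := by nlinarith
      have h1 : ‖cc j‖ ≤ ((2*(n:ℝ)-1)*r)⁻¹ * (‖ev bb‖ * ‖ev (rowv j)‖) := by
        rw [hcc]
        simp only [norm_mul, norm_inv]
        refine mul_le_mul ?_ (hwb j) (norm_nonneg _) (by positivity)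
        exact inv_anti₀ habs (hgap j hj')
      calc ‖cc j‖ * ‖ev (colv j)‖
          ≤ (((2*(n:ℝ)-1)*r)⁻¹ * (‖ev bb‖ * ‖ev (rowv j)‖)) * ‖ev (colv j)‖ :=
            mul_le_mul_of_nonneg_right h1 (norm_nonneg _)
        _ = ((2*(n:ℝ)-1)*r)⁻¹ * (‖ev bb‖ * (‖ev (colv j)‖ * ‖ev (rowv j)‖)) := by ring
        _ ≤ ((2*(n:ℝ)-1)*r)⁻¹ * (‖ev bb‖ * κ1) := by
            have hev : ‖ev (colv j)‖ * ‖ev (rowv j)‖ = evCond V j := by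
              rw [evCond, l2norm_eq, l2norm_eq]
            have := hev ▸ hmax j
            gcongr
    have hxlow : r⁻¹ * ‖ev bb‖^2 * ‖ev a‖
        - ((n:ℝ)-1) * (((2*(n:ℝ)-1)*r)⁻¹ * (‖ev bb‖ * κ1)) ≤ ‖ev x‖ := by
      have h1 : ev x = cc j0 • ev (colv j0) + ∑ j ∈ Finset.univ.erase j0, cc j • ev (colv j) := by
        rw [hxsum, ← Finset.add_sum_erase _ _ (Finset.mem_univ j0)]
      have h2 : ‖∑ j ∈ Finset.univ.erase j0, cc j • ev (colv j)‖
          ≤ ((n:ℝ)-1) * (((2*(n:ℝ)-1)*r)⁻¹ * (‖ev bb‖ * κ1)) := by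
        refine le_trans (norm_sum_le _ _) ?_
        refine le_trans (Finset.sum_le_card_nsmul _ _ _ hterm) ?_
        rw [Finset.card_erase_of_mem (Finset.mem_univ j0), Finset.card_univ, Fintype.card_fin,
          nsmul_eq_mul, Nat.cast_sub hn, Nat.cast_one]
      have h3 : ‖cc j0 • ev (colv j0)‖ ≤ ‖ev x‖
          + ‖∑ j ∈ Finset.univ.erase j0, cc j • ev (colv j)‖ := by
        have h4 : cc j0 • ev (colv j0) = ev x - ∑ j ∈ Finset.univ.erase j0, cc j • ev (colv j) := by
          rw [h1]; abel
        rw [h4]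
        exact norm_sub_le _ _
      rw [hcj0] at h3
      linarith
    have h2N : (0:ℝ) < 2*(n:ℝ) - 1 := by nlinarith
    have heq : r⁻¹ * ‖ev bb‖^2 * ‖ev a‖ - ((n:ℝ)-1) * (((2*(n:ℝ)-1)*r)⁻¹ * (‖ev bb‖ * κ1))
        = ‖ev bb‖ * κ1 * (n:ℝ) / ((2*(n:ℝ)-1)*r) := by
      have hr0 : r ≠ 0 := ne_of_gt hrpos
      have h2N0 : (2*(n:ℝ)-1) ≠ 0 := ne_of_gt h2N
      rw [hκ]
      rw [div_eq_mul_inv, mul_inv]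
      linear_combination (-(‖ev bb‖^2*‖ev a‖*r⁻¹)) * (mul_inv_cancel₀ h2N0)
    have hXlow : ‖ev bb‖ * κ1 * (n:ℝ) / ((2*(n:ℝ)-1)*r) ≤ ‖ev x‖ := by
      linarith [hxlow, heq]
    have hBe : ‖ev bb‖ ≤ ε * ‖ev x‖ := by
      have h5 : ‖ev bb‖ * ((2*(n:ℝ)-1)*r) ≤ ε * (‖ev bb‖ * κ1 * (n:ℝ)) := by
        nlinarith [mul_le_mul_of_nonneg_left hκε (mul_nonneg hbN.le (le_of_lt hNpos)),
          mul_pos hbN hrpos]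
      have h6 : ‖ev bb‖ ≤ ε * (‖ev bb‖ * κ1 * (n:ℝ) / ((2*(n:ℝ)-1)*r)) := by
        rw [mul_comm ε, div_mul_eq_mul_div, le_div_iff₀ (by positivity)]
        linarith
      exact le_trans h6 (mul_le_mul_of_nonneg_left hXlow hε.le)
    have hXpos : 0 < ‖ev x‖ :=
      lt_of_lt_of_le (by positivity : (0:ℝ) < ‖ev bb‖ * κ1 * (n:ℝ) / ((2*(n:ℝ)-1)*r)) hXlow
    have hray := sLow_rayleigh M x
    rw [hMxu] at hray
    have hun : ‖ev u‖ = ‖ev bb‖ := by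
      rw [ev_norm, ev_norm]
      congr 1
      refine Finset.sum_congr rfl fun i _ => ?_
      rw [hu, Complex.norm_conj]
    rw [hun] at hray
    exact le_of_mul_le_mul_right (le_trans hray hBe) hXpos


end
end

section
/- Let W ⊆ ℂ^n be a linear subspace of dimension k ≥ 1. Then there exist an n×n permutation matrix P, a k×k diagonal matrix D with |D_{jj}| ≥ 1/√n for every j, and an (n−k)×k matrix X, such that every column of the n×k block matrix [D; X] (D stacked above X) has unit ℓ² norm and W equals the column space of P·[D; X]. -/
open MeasureTheory Matrix
open scoped ENNReal

noncomputable section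

lemma exists_unit_submatrix {n k : ℕ} (M : Matrix (Fin n) (Fin k) ℂ)
    (h : LinearIndependent ℂ (fun j => Mᵀ j)) :
    ∃ σ : Fin k → Fin n, Function.Injective σ ∧ IsUnit (M.submatrix σ id) := by
  classical
  have hrankT : Mᵀ.rank = k := by
    exact (h.rank_matrix : Mᵀ.rank = Fintype.card (Fin k)).trans (Fintype.card_fin k)
  have hspan : Submodule.span ℂ (Set.range M) = ⊤ := by
    apply Submodule.eq_top_of_finrank_eq
    have h1 : M.rank = Module.finrank ℂ (Submodule.span ℂ (Set.range M)) :=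
      M.rank_eq_finrank_span_row
    have h2 : M.rank = k := by
      rw [← Matrix.rank_transpose]; exact hrankT
    rw [← h1, h2, Module.finrank_fin_fun]
  obtain ⟨b, hbsub, hbspan, hbind⟩ := exists_linearIndependent ℂ (Set.range M)
  rw [hspan] at hbspan
  have hfin : b.Finite := hbind.setFinite
  haveI : Fintype b := hfin.fintype
  let bas : Module.Basis b ℂ (Fin k → ℂ) := Module.Basis.mk hbind (by rw [Subtype.range_coe, hbspan])
  have hcard : Fintype.card b = k := by
    have := Module.finrank_eq_card_basis bas
    rw [Module.finrank_fin_fun] at this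
    omega
  let e : Fin k ≃ b := (Fintype.equivFinOfCardEq hcard).symm
  have hchoose : ∀ m : Fin k, ∃ i : Fin n, M i = (e m : Fin k → ℂ) := fun m => hbsub (e m).2
  choose σ hσ using hchoose
  refine ⟨σ, ?_, ?_⟩
  · intro m1 m2 hm
    have : (e m1 : Fin k → ℂ) = (e m2 : Fin k → ℂ) := by rw [← hσ m1, ← hσ m2, hm]
    exact e.injective (Subtype.ext this)
  · rw [← linearIndependent_rows_iff_isUnit]
    have : (fun m => (M.submatrix σ id) m) = fun m => ((e m : Fin k → ℂ)) := by
      funext m; exact hσ m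
    rw [show (M.submatrix σ id).row = fun m => ((e m : Fin k → ℂ)) from this]
    exact hbind.comp e e.injective

lemma cramer_row_identity {k : ℕ} (A : Matrix (Fin k) (Fin k) ℂ) (hdet : A.det ≠ 0)
    (r : Fin k → ℂ) (j : Fin k) :
    (∑ l, r l * A⁻¹ l j) * A.det = (A.updateRow j r).det := by
  have hA : A⁻¹ = (A.det)⁻¹ • A.adjugate := by rw [Matrix.inv_def, Ring.inverse_eq_inv']
  rw [← Matrix.cramer_transpose_apply, Matrix.cramer_eq_adjugate_mulVec,
    ← Matrix.adjugate_transpose, hA]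
  simp only [Matrix.mulVec, dotProduct, Matrix.transpose_apply, Matrix.smul_apply,
    smul_eq_mul]
  rw [Finset.sum_mul]
  apply Finset.sum_congr rfl
  intro l _
  field_simp


/-- reduced row echelon form basis. -/
theorem rref_basis {n k : ℕ} (hk : 1 ≤ k) (W : Submodule ℂ (Fin n → ℂ))
    (hW : Module.finrank ℂ W = k) :
    ∃ (e : Equiv.Perm (Fin n)) (B : Matrix (Fin n) (Fin k) ℂ) (hkn : k ≤ n),
      (∀ i j : Fin k, i ≠ j → B (Fin.castLE hkn i) j = 0) ∧
      (∀ j : Fin k, 1 / Real.sqrt n ≤ ‖B (Fin.castLE hkn j) j‖) ∧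
      (∀ j : Fin k, ∑ i, ‖B i j‖ ^ 2 = 1) ∧
      W = LinearMap.range (Matrix.toLin' (e.permMatrix ℂ * B)) := by
  classical
  have hkn : k ≤ n := by
    have h1 := Submodule.finrank_le W
    rwa [hW, Module.finrank_fin_fun] at h1
  let b : Module.Basis (Fin k) ℂ W := Module.finBasisOfFinrankEq ℂ W hW
  let M : Matrix (Fin n) (Fin k) ℂ := Matrix.of fun i j => (b j : Fin n → ℂ) i
  have hcols : LinearIndependent ℂ (fun j => Mᵀ j) := by
    have h0 : (fun j => Mᵀ j) = fun j => W.subtype (b j) := rfl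
    rw [h0]
    exact b.linearIndependent.map' W.subtype W.ker_subtype
  have hWM : W = LinearMap.range (Matrix.toLin' M) := by
    rw [Matrix.range_toLin']
    have h1 : Set.range M.col = W.subtype '' Set.range b := by
      rw [← Set.range_comp]; rfl
    rw [h1, Submodule.span_image, b.span_eq, Submodule.map_top, Submodule.range_subtype]
  obtain ⟨σ0, hσ0inj, hσ0unit⟩ := exists_unit_submatrix M hcols
  obtain ⟨σe, -, hmax⟩ := Finset.exists_max_image Finset.univ
    (fun σ : Fin k ↪ Fin n => ‖(M.submatrix σ id).det‖) ⟨⟨σ0, hσ0inj⟩, Finset.mem_univ _⟩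
  set σ : Fin k → Fin n := ⇑σe with hσdef
  set A : Matrix (Fin k) (Fin k) ℂ := M.submatrix σ id with hAdef
  have hdet : A.det ≠ 0 := by
    have h0 : (0:ℝ) < ‖(M.submatrix σ0 id).det‖ := by
      have hu := (Matrix.isUnit_iff_isUnit_det _).mp hσ0unit
      exact norm_pos_iff.mpr (isUnit_iff_ne_zero.mp hu)
    have hle := hmax ⟨σ0, hσ0inj⟩ (Finset.mem_univ _)
    simp only [Function.Embedding.coeFn_mk] at hle
    intro h
    rw [h, norm_zero] at hle
    exact absurd hle (not_le.mpr h0)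
  have hdetU : IsUnit A.det := isUnit_iff_ne_zero.mpr hdet
  set C : Matrix (Fin n) (Fin k) ℂ := M * A⁻¹ with hCdef
  have hCσ : ∀ l j : Fin k, C (σ l) j = if l = j then 1 else 0 := by
    intro l j
    have h1 : C (σ l) j = (A * A⁻¹) l j := by
      simp [hCdef, Matrix.mul_apply, hAdef]
    rw [h1, Matrix.mul_nonsing_inv _ hdetU, Matrix.one_apply]
  have hbound : ∀ (i : Fin n) (j : Fin k), ‖C i j‖ ≤ 1 := by
    intro i j
    by_cases hi : ∃ l, σ l = i
    · obtain ⟨l, rfl⟩ := hi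
      rw [hCσ]
      split <;> simp
    · push_neg at hi
      have hinj' : Function.Injective (Function.update σ j i) := by
        intro a c hac
        simp only [Function.update_apply] at hac
        split_ifs at hac with ha hc hc
        · rw [ha, hc]
        · exact absurd hac.symm (hi c)
        · exact absurd hac (hi a)
        · exact σe.injective hac
      have hkey : C i j * A.det = (M.submatrix (Function.update σ j i) id).det := by
        have h2 : M.submatrix (Function.update σ j i) id = A.updateRow j (M i) := by
          ext m l
          rw [Matrix.submatrix_apply, Matrix.updateRow_apply, Function.update_apply]
          split <;> rfl
        rw [h2, ← cramer_row_identity A hdet (M i) j]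
        rfl
      have hle := hmax ⟨Function.update σ j i, hinj'⟩ (Finset.mem_univ _)
      simp only [Function.Embedding.coeFn_mk] at hle
      rw [← hkey, norm_mul] at hle
      have hpos : 0 < ‖A.det‖ := norm_pos_iff.mpr hdet
      have : ‖C i j‖ * ‖A.det‖ ≤ 1 * ‖A.det‖ := by
        rwa [one_mul]
      exact le_of_mul_le_mul_right this hpos

  set s : Fin k → ℝ := fun j => ∑ i, ‖C i j‖ ^ 2 with hsdef
  have hs_nonneg : ∀ j, 0 ≤ s j := fun j => Finset.sum_nonneg fun i _ => sq_nonneg _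
  have hs1 : ∀ j, 1 ≤ s j := by
    intro j
    have h1 : ‖C (σ j) j‖ ^ 2 = 1 := by rw [hCσ]; simp
    have h2 : ‖C (σ j) j‖ ^ 2 ≤ s j :=
      Finset.single_le_sum (f := fun i => ‖C i j‖ ^ 2)
        (fun i _ => sq_nonneg _) (Finset.mem_univ (σ j))
    rw [h1] at h2
    exact h2
  have hsn : ∀ j, s j ≤ n := by
    intro j
    calc s j ≤ ∑ _i : Fin n, (1:ℝ) :=
          Finset.sum_le_sum fun i _ => pow_le_one₀ (norm_nonneg _) (hbound i j)
      _ = n := by simp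
  set c : Fin k → ℝ := fun j => Real.sqrt (s j) with hcdef
  have hc1 : ∀ j, 1 ≤ c j := by
    intro j
    have h := Real.sqrt_le_sqrt (hs1 j)
    rwa [Real.sqrt_one] at h
  have hcpos : ∀ j, 0 < c j := fun j => lt_of_lt_of_le zero_lt_one (hc1 j)
  have hcn : ∀ j, c j ≤ Real.sqrt n := fun j => Real.sqrt_le_sqrt (hsn j)
  have hc_sq : ∀ j, c j ^ 2 = s j := fun j => Real.sq_sqrt (hs_nonneg j)
  set d : Fin k → ℂ := fun j => (((c j)⁻¹ : ℝ) : ℂ) with hddef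
  have habs_d : ∀ j, ‖d j‖ = (c j)⁻¹ := by
    intro j
    rw [hddef]
    rw [Complex.norm_real, Real.norm_eq_abs, abs_of_nonneg (inv_nonneg.mpr (hcpos j).le)]
  have hd_ne : ∀ j, d j ≠ 0 := fun j => Complex.ofReal_ne_zero.mpr (inv_ne_zero (hcpos j).ne')
  set C' : Matrix (Fin n) (Fin k) ℂ := C * Matrix.diagonal d with hC'def
  have hC'app : ∀ i j, C' i j = C i j * d j := fun i j => Matrix.mul_diagonal _ _ _ _
  -- permutation
  let ι : Fin k ↪ Fin n := ⟨Fin.castLE hkn, Fin.castLE_injective hkn⟩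
  let eq0 : {x // x ∈ Set.range ⇑ι} ≃ {x // x ∈ Set.range ⇑σe} :=
    (Equiv.ofInjective _ ι.injective).symm.trans (Equiv.ofInjective _ σe.injective)
  let τ : Equiv.Perm (Fin n) := eq0.extendSubtype
  have hτ : ∀ j : Fin k, τ (Fin.castLE hkn j) = σ j := by
    intro j
    have hmem : Fin.castLE hkn j ∈ Set.range ⇑ι := ⟨j, rfl⟩
    rw [show τ (Fin.castLE hkn j) = ↑(eq0 ⟨Fin.castLE hkn j, hmem⟩) from
      Equiv.extendSubtype_apply_of_mem eq0 _ hmem]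
    have h1 : ∀ h, ((Equiv.ofInjective ⇑ι ι.injective).symm ⟨Fin.castLE hkn j, h⟩) = j := by
      intro h
      apply (Equiv.ofInjective ⇑ι ι.injective).injective
      rw [Equiv.apply_symm_apply]
      apply Subtype.ext
      rfl
    simp only [eq0, Equiv.trans_apply]
    rw [h1]
    rfl
  set B : Matrix (Fin n) (Fin k) ℂ := C'.submatrix τ id with hBdef
  have hBrow : ∀ (j : Fin k) (j' : Fin k), B (Fin.castLE hkn j) j' = C' (σ j) j' := by
    intro j j'
    rw [hBdef, Matrix.submatrix_apply, hτ, id]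
  refine ⟨τ.symm, B, hkn, ?_, ?_, ?_, ?_⟩
  · intro i j hij
    rw [hBrow, hC'app, hCσ, if_neg hij, zero_mul]
  · intro j
    rw [hBrow, hC'app, hCσ, if_pos rfl, one_mul, habs_d, one_div]
    exact inv_anti₀ (hcpos j) (hcn j)
  · intro j
    have h1 : ∀ i, ‖B i j‖ ^ 2 = ‖C' (τ i) j‖ ^ 2 := by
      intro i; rw [hBdef, Matrix.submatrix_apply, id]
    simp_rw [h1]
    rw [Equiv.sum_comp τ (fun i => ‖C' i j‖ ^ 2)]
    have h2 : ∀ i, ‖C' i j‖ ^ 2 = ‖C i j‖ ^ 2 * ((c j)⁻¹) ^ 2 := by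
      intro i
      rw [hC'app, norm_mul, habs_d, mul_pow]
    simp_rw [h2]
    rw [← Finset.sum_mul]
    have h3 : (∑ i, ‖C i j‖ ^ 2) = c j ^ 2 := (hc_sq j).symm
    rw [h3, ← mul_pow, mul_inv_cancel₀ (hcpos j).ne', one_pow]
  · have hperm : Equiv.Perm.permMatrix ℂ τ.symm * B = C' := by
      show (Equiv.toPEquiv τ.symm).toMatrix * B = C'
      rw [PEquiv.toMatrix_toPEquiv_mul]
      ext i j
      rw [Matrix.submatrix_apply, hBdef, Matrix.submatrix_apply, Equiv.apply_symm_apply]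
      rfl
    rw [hperm]
    have hN : IsUnit (A⁻¹ * Matrix.diagonal d) := by
      rw [Matrix.isUnit_iff_isUnit_det, Matrix.det_mul, Matrix.det_nonsing_inv,
        Matrix.det_diagonal, isUnit_iff_ne_zero]
      apply mul_ne_zero
      · rw [Ring.inverse_eq_inv']
        exact inv_ne_zero hdet
      · exact Finset.prod_ne_zero_iff.mpr fun j _ => hd_ne j
    have hC'M : C' = M * (A⁻¹ * Matrix.diagonal d) := by
      rw [hC'def, hCdef, Matrix.mul_assoc]
    rw [hC'M, Matrix.toLin'_mul, LinearMap.range_comp_of_range_eq_top, ← hWM]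
    rw [LinearMap.range_eq_top]
    have hsurj := Matrix.mulVec_surjective_iff_isUnit.mpr hN
    intro y
    obtain ⟨x, hx⟩ := hsurj y
    exact ⟨x, by rw [Matrix.toLin'_apply]; exact hx⟩

end
end

section
/- Fix n ≥ 1, ρ ∈ (0,1], v ∈ ℂ^n, r > 0 and s ∈ (0,1). If p(v,r) ≥ s, then the number of indices j with |v_j| ≥ r·√(2/s) is at most log(2/s)/ρ. -/
open MeasureTheory Matrix
open scoped ENNReal

noncomputable section

lemma lintegral_ofReal_exp_neg_sq :
    ∫⁻ (x : ℝ), ENNReal.ofReal (Real.exp (-(x ^ 2))) = ENNReal.ofReal (Real.sqrt Real.pi) := by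
  rw [← ofReal_integral_eq_lintegral_ofReal]
  · have h := integral_gaussian 1
    simp only [neg_mul, one_mul] at h
    rw [h, div_one]
  · simpa using integrable_exp_neg_mul_sq (one_pos)
  · filter_upwards with x using (Real.exp_pos _).le

lemma gaussianC_univ : gaussianC Set.univ = 1 := by
  have hg : Measurable fun p : ℝ × ℝ =>
      ENNReal.ofReal (Real.pi⁻¹ * (Real.exp (-(p.1 ^ 2)) * Real.exp (-(p.2 ^ 2)))) := by
    fun_prop
  rw [gaussianC, withDensity_apply _ MeasurableSet.univ, Measure.restrict_univ]
  have h1 : ∫⁻ z : ℂ, ENNReal.ofReal (Real.pi⁻¹ * Real.exp (-(‖z‖ ^ 2)))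
      = ∫⁻ p : ℝ × ℝ, ENNReal.ofReal (Real.pi⁻¹ * (Real.exp (-(p.1 ^ 2)) * Real.exp (-(p.2 ^ 2)))) := by
    rw [← Complex.volume_preserving_equiv_real_prod.lintegral_comp hg]
    refine lintegral_congr fun z => ?_
    have hz : ‖z‖ ^ 2
        = (Complex.measurableEquivRealProd z).1 ^ 2 + (Complex.measurableEquivRealProd z).2 ^ 2 := by
      rw [Complex.sq_norm, Complex.normSq_apply]
      simp only [Complex.measurableEquivRealProd_apply]
      ring
    rw [hz, neg_add, Real.exp_add]
  rw [h1, Measure.volume_eq_prod]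
  have h2 : ∀ p : ℝ × ℝ, ENNReal.ofReal (Real.pi⁻¹ * (Real.exp (-(p.1 ^ 2)) * Real.exp (-(p.2 ^ 2))))
      = (ENNReal.ofReal Real.pi⁻¹ * ENNReal.ofReal (Real.exp (-(p.1 ^ 2)))) * ENNReal.ofReal (Real.exp (-(p.2 ^ 2))) := by
    intro p
    rw [← ENNReal.ofReal_mul (by positivity), ← ENNReal.ofReal_mul (by positivity), mul_assoc]
  simp_rw [h2]
  rw [lintegral_prod_mul (f := fun a : ℝ => ENNReal.ofReal Real.pi⁻¹ * ENNReal.ofReal (Real.exp (-a ^ 2)))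
    (g := fun a : ℝ => ENNReal.ofReal (Real.exp (-a ^ 2))) (by fun_prop) (by fun_prop)]
  have he : ∫⁻ (x : ℝ), ENNReal.ofReal (Real.exp (-x ^ 2)) = ENNReal.ofReal (Real.sqrt Real.pi) := by
    simpa using lintegral_ofReal_exp_neg_sq
  rw [lintegral_const_mul _ (by fun_prop), he]
  rw [← ENNReal.ofReal_mul (by positivity), ← ENNReal.ofReal_mul (by positivity),
    mul_assoc, Real.mul_self_sqrt Real.pi_pos.le, inv_mul_cancel₀ Real.pi_ne_zero,
    ENNReal.ofReal_one]

lemma sparseG_apply {ρ : ℝ} {S : Set ℂ} (hS : MeasurableSet S) :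
    sparseG ρ S = ENNReal.ofReal ρ * gaussianC S + ENNReal.ofReal (1 - ρ) * S.indicator 1 0 := by
  rw [sparseG, Measure.add_apply, Measure.smul_apply, Measure.smul_apply, smul_eq_mul,
    smul_eq_mul, Measure.dirac_apply' _ hS]

lemma sparseG_isProb {ρ : ℝ} (hρl : 0 < ρ) (hρu : ρ ≤ 1) : IsProbabilityMeasure (sparseG ρ) := by
  constructor
  rw [sparseG_apply MeasurableSet.univ, gaussianC_univ, Set.indicator_univ, mul_one,
    Pi.one_apply, mul_one, ← ENNReal.ofReal_add hρl.le (by linarith)]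
  norm_num

lemma measSet_abs_le {α : Type*} [MeasurableSpace α] {g : α → ℂ} (hg : Measurable g)
    (z : ℂ) (r : ℝ) : MeasurableSet {x | ‖g x - z‖ ≤ r} := by
  have : {x | ‖g x - z‖ ≤ r} = g ⁻¹' Metric.closedBall z r := by
    ext x; simp [Metric.mem_closedBall, Complex.dist_eq]
  rw [this]; exact hg measurableSet_closedBall

lemma gaussianC_ball_le {c : ℂ} (hc : c ≠ 0) (w : ℂ) {t : ℝ} (ht : 0 ≤ t) :
    gaussianC {y : ℂ | ‖y * (starRingEnd ℂ) c - w‖ ≤ t}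
      ≤ ENNReal.ofReal ((t / ‖c‖) ^ 2) := by
  have hc' : (starRingEnd ℂ) c ≠ 0 := by simpa using hc
  have habs : 0 < ‖c‖ := by simpa [norm_pos_iff] using hc
  have hset : {y : ℂ | ‖y * (starRingEnd ℂ) c - w‖ ≤ t}
      = Metric.closedBall (w / (starRingEnd ℂ) c) (t / ‖c‖) := by
    ext y
    simp only [Set.mem_setOf_eq, Metric.mem_closedBall, Complex.dist_eq]
    have key : ‖y * (starRingEnd ℂ) c - w‖
        = ‖c‖ * ‖y - w / (starRingEnd ℂ) c‖ := by
      rw [← Complex.norm_conj c, ← norm_mul]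
      congr 1
      field_simp
    rw [key, le_div_iff₀ habs, mul_comm]
  rw [hset, gaussianC, withDensity_apply _ measurableSet_closedBall]
  calc ∫⁻ y in Metric.closedBall (w / (starRingEnd ℂ) c) (t / ‖c‖),
        ENNReal.ofReal (Real.pi⁻¹ * Real.exp (-(‖y‖ ^ 2)))
      ≤ ∫⁻ _ in Metric.closedBall (w / (starRingEnd ℂ) c) (t / ‖c‖),
        ENNReal.ofReal Real.pi⁻¹ := by
        refine lintegral_mono fun y => ENNReal.ofReal_le_ofReal ?_
        have := Real.exp_le_one_iff.mpr (neg_nonpos.mpr (sq_nonneg (‖y‖)))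
        exact mul_le_of_le_one_right (by positivity) this
    _ = ENNReal.ofReal Real.pi⁻¹ * volume (Metric.closedBall (w / (starRingEnd ℂ) c) (t / ‖c‖)) := by
        rw [setLIntegral_const]
    _ ≤ ENNReal.ofReal ((t / ‖c‖) ^ 2) := by
        rw [Complex.volume_closedBall]
        have hnn : 0 ≤ t / ‖c‖ := by positivity
        rw [← ENNReal.ofReal_pow hnn, show ((NNReal.pi : ℝ≥0∞)) = ENNReal.ofReal Real.pi by
          rw [← NNReal.coe_real_pi, ENNReal.ofReal_coe_nnreal],
          ← ENNReal.ofReal_mul (by positivity), ← ENNReal.ofReal_mul (by positivity)]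
        refine ENNReal.ofReal_le_ofReal (le_of_eq ?_)
        field_simp


lemma key_induction {n : ℕ} {ρ r s : ℝ} (hρl : 0 < ρ) (hρu : ρ ≤ 1) (hr : 0 < r)
    (hs0 : 0 < s) (hs1 : s < 1) (T : Finset (Fin n)) :
    ∀ (v : Fin n → ℂ), (∀ j ∈ T, r * Real.sqrt (2 / s) ≤ ‖v j‖) →
    ∀ (z : ℂ) (x₀ : Fin n → ℂ),
    (∫⋯∫⁻_T, Set.indicator
        {x : Fin n → ℂ | ‖(∑ j, x j * (starRingEnd ℂ) (v j)) - z‖ ≤ r} 1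
        ∂(fun _ => sparseG ρ)) x₀
      ≤ ENNReal.ofReal ((1 - ρ) ^ T.card) + ENNReal.ofReal (s / 2) := by
  classical
  haveI : IsProbabilityMeasure (sparseG ρ) := sparseG_isProb hρl hρu
  have hmeasS : ∀ (v : Fin n → ℂ) (z : ℂ), MeasurableSet
      {x : Fin n → ℂ | ‖(∑ j, x j * (starRingEnd ℂ) (v j)) - z‖ ≤ r} := by
    intro v z
    exact measSet_abs_le (by fun_prop) z r
  have hmf : ∀ (v : Fin n → ℂ) (z : ℂ), Measurable (Set.indicator
      {x : Fin n → ℂ | ‖(∑ j, x j * (starRingEnd ℂ) (v j)) - z‖ ≤ r}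
      (1 : (Fin n → ℂ) → ℝ≥0∞)) := fun v z => measurable_one.indicator (hmeasS v z)
  induction T using Finset.induction_on with
  | empty =>
    intro v hv z x₀
    rw [lmarginal_empty, Finset.card_empty, pow_zero, ENNReal.ofReal_one]
    exact le_add_right (Set.indicator_apply_le' (fun _ => le_rfl) (fun _ => zero_le_one))
  | @insert j T' hj ih =>
    intro v hv z x₀
    set S := {x : Fin n → ℂ | ‖(∑ i, x i * (starRingEnd ℂ) (v i)) - z‖ ≤ r} with hSdef
    set f := Set.indicator S (1 : (Fin n → ℂ) → ℝ≥0∞) with hfdef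
    set v' := Function.update v j 0 with hv'def
    set S' := {x : Fin n → ℂ | ‖(∑ i, x i * (starRingEnd ℂ) (v' i)) - z‖ ≤ r} with hS'def
    set f' := Set.indicator S' (1 : (Fin n → ℂ) → ℝ≥0∞) with hf'def
    set a := ENNReal.ofReal ρ * ENNReal.ofReal (s / 2) with hadef
    set b := ENNReal.ofReal (1 - ρ) with hbdef
    have hvj : r * Real.sqrt (2 / s) ≤ ‖v j‖ := hv j (Finset.mem_insert_self j T')
    have hthr : 0 < r * Real.sqrt (2 / s) := by positivity
    have hvj0 : v j ≠ 0 := by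
      intro h
      rw [h, norm_zero] at hvj
      linarith
    -- the sum-update identity
    have hsum : ∀ (x : Fin n → ℂ) (y : ℂ),
        (∑ i, Function.update x j y i * (starRingEnd ℂ) (v i))
          = y * (starRingEnd ℂ) (v j) + ∑ i ∈ Finset.univ \ {j}, x i * (starRingEnd ℂ) (v i) := by
      intro x y
      have : (fun i => Function.update x j y i * (starRingEnd ℂ) (v i))
          = Function.update (fun i => x i * (starRingEnd ℂ) (v i)) j (y * (starRingEnd ℂ) (v j)) := by
        funext i
        rcases eq_or_ne i j with rfl | h
        · simp
        · simp [Function.update_of_ne h]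
      rw [this, Finset.sum_update_of_mem (Finset.mem_univ j)]
    have hsum' : ∀ (x : Fin n → ℂ),
        (∑ i, x i * (starRingEnd ℂ) (v' i)) = ∑ i ∈ Finset.univ \ {j}, x i * (starRingEnd ℂ) (v i) := by
      intro x
      have : (fun i => x i * (starRingEnd ℂ) (v' i))
          = Function.update (fun i => x i * (starRingEnd ℂ) (v i)) j 0 := by
        funext i
        rcases eq_or_ne i j with rfl | h
        · simp [hv'def]
        · simp [hv'def, Function.update_of_ne h]
      rw [this, Finset.sum_update_of_mem (Finset.mem_univ j), zero_add]
    -- the inner (single-coordinate) bound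
    have hinner : ∀ x : Fin n → ℂ,
        (∫⁻ y, f (Function.update x j y) ∂sparseG ρ) ≤ a + b * f' x := by
      intro x
      set w := z - ∑ i ∈ Finset.univ \ {j}, x i * (starRingEnd ℂ) (v i) with hwdef
      set Sy := {y : ℂ | ‖y * (starRingEnd ℂ) (v j) - w‖ ≤ r} with hSydef
      have hSy : MeasurableSet Sy := measSet_abs_le (by fun_prop) w r
      have hmem : ∀ y : ℂ, (Function.update x j y ∈ S) ↔ y ∈ Sy := by
        intro y
        simp only [hSdef, hSydef, Set.mem_setOf_eq, hsum x y, hwdef]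
        constructor <;> intro h <;> [skip; skip] <;>
          · convert h using 2; ring
      have hfy : ∀ y : ℂ, f (Function.update x j y) = Sy.indicator 1 y := by
        intro y
        simp only [hfdef, Set.indicator_apply, Pi.one_apply]
        rw [if_congr (hmem y) rfl rfl]
      have hf'x : f' x = Sy.indicator 1 0 := by
        simp only [hf'def, Set.indicator_apply, Pi.one_apply]
        refine if_congr ?_ rfl rfl
        rw [← hmem 0]
        simp only [hSdef, hS'def, Set.mem_setOf_eq, hsum x 0, hsum' x, zero_mul, zero_add]
      calc (∫⁻ y, f (Function.update x j y) ∂sparseG ρ)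
          = sparseG ρ Sy := by
            simp_rw [hfy]; exact lintegral_indicator_one hSy
        _ = ENNReal.ofReal ρ * gaussianC Sy + b * Sy.indicator 1 0 := sparseG_apply hSy
        _ ≤ a + b * f' x := by
            rw [hf'x]
            refine add_le_add_left (mul_le_mul_right ?_ _) _
            -- Gaussian small-ball bound
            refine le_trans (gaussianC_ball_le hvj0 w hr.le) ?_
            refine ENNReal.ofReal_le_ofReal ?_
            have habs : 0 < ‖v j‖ := lt_of_lt_of_le hthr hvj
            have h1 : r ^ 2 * (2 / s) ≤ ‖v j‖ ^ 2 := by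
              calc r ^ 2 * (2 / s) = (r * Real.sqrt (2 / s)) ^ 2 := by
                    rw [mul_pow, Real.sq_sqrt (by positivity)]
                _ ≤ ‖v j‖ ^ 2 := by
                    exact pow_le_pow_left₀ hthr.le hvj 2
            have h2 : r ^ 2 ≤ s / 2 * ‖v j‖ ^ 2 := by
              have h3 := mul_le_mul_of_nonneg_left h1 (by positivity : (0:ℝ) ≤ s / 2)
              calc r ^ 2 = s / 2 * (r ^ 2 * (2 / s)) := by field_simp
                _ ≤ _ := h3
            rw [div_pow, div_le_iff₀ (by positivity)]
            linarith
    -- measurability of f'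
    have hf' : Measurable f' := hmf v' z
    -- assemble
    rw [lmarginal_insert' _ (hmf v z) hj]
    calc (∫⋯∫⁻_T', (fun x => ∫⁻ y, f (Function.update x j y) ∂sparseG ρ) ∂fun _ => sparseG ρ) x₀
        ≤ (∫⋯∫⁻_T', (fun x => a + b * f' x) ∂fun _ => sparseG ρ) x₀ :=
          lmarginal_mono (fun x => hinner x) x₀
      _ = a + b * (∫⋯∫⁻_T', f' ∂fun _ => sparseG ρ) x₀ := by
          simp only [lmarginal]
          rw [lintegral_add_left measurable_const,
            lintegral_const_mul (f := fun y : {x // x ∈ T'} → ℂ =>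
              f' (Function.updateFinset x₀ T' y)) b (hf'.comp measurable_updateFinset),
            lintegral_const, measure_univ, mul_one]
      _ ≤ a + b * (ENNReal.ofReal ((1 - ρ) ^ T'.card) + ENNReal.ofReal (s / 2)) := by
          refine add_le_add_right (mul_le_mul_right ?_ _) _
          refine ih v' (fun i hi => ?_) z x₀
          have hij : i ≠ j := fun h => hj (h ▸ hi)
          rw [hv'def, Function.update_of_ne hij]
          exact hv i (Finset.mem_insert_of_mem hi)
      _ = ENNReal.ofReal ((1 - ρ) ^ (insert j T').card) + ENNReal.ofReal (s / 2) := by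
          have hb1 : b * ENNReal.ofReal ((1 - ρ) ^ T'.card)
              = ENNReal.ofReal ((1 - ρ) ^ (insert j T').card) := by
            rw [hbdef, ← ENNReal.ofReal_mul (by linarith), Finset.card_insert_of_notMem hj,
              pow_succ, mul_comm]
          have hb2 : a + b * ENNReal.ofReal (s / 2) = ENNReal.ofReal (s / 2) := by
            rw [hadef, hbdef, ← add_mul, ← ENNReal.ofReal_add hρl.le (by linarith),
              show ρ + (1 - ρ) = 1 by ring, ENNReal.ofReal_one, one_mul]
          calc a + b * (ENNReal.ofReal ((1 - ρ) ^ T'.card) + ENNReal.ofReal (s / 2))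
              = b * ENNReal.ofReal ((1 - ρ) ^ T'.card) + (a + b * ENNReal.ofReal (s / 2)) := by
                ring
            _ = _ := by rw [hb1, hb2]

/-- compressible vectors are close to sparse. -/
theorem comp_close_to_sparse {n : ℕ} (ρ : ℝ) (hρ : ρ ∈ Set.Ioc (0 : ℝ) 1)
    (v : Fin n → ℂ) (r s : ℝ) (hr : 0 < r) (hs : s ∈ Set.Ioo (0 : ℝ) 1)
    (h : ENNReal.ofReal s ≤ pconc n ρ v r) :
    (({j | r * Real.sqrt (2 / s) ≤ ‖v j‖} : Set (Fin n)).ncard : ℝ)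
      ≤ Real.log (2 / s) / ρ := by
  classical
  obtain ⟨hρl, hρu⟩ := hρ
  obtain ⟨hs0, hs1⟩ := hs
  haveI : IsProbabilityMeasure (sparseG ρ) := sparseG_isProb hρl hρu
  set T : Finset (Fin n) := Finset.univ.filter (fun j => r * Real.sqrt (2 / s) ≤ ‖v j‖)
    with hTdef
  have hTset : ({j | r * Real.sqrt (2 / s) ≤ ‖v j‖} : Set (Fin n)) = ↑T := by
    ext j; simp [hTdef]
  rw [hTset, Set.ncard_coe_finset]
  have hTmem : ∀ j ∈ T, r * Real.sqrt (2 / s) ≤ ‖v j‖ := by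
    intro j hjm
    simpa [hTdef] using hjm
  -- bound each term of the sup
  have hbound : ∀ z : ℂ,
      vecLaw n ρ {x | ‖(∑ j, x j * (starRingEnd ℂ) (v j)) - z‖ ≤ r}
        ≤ ENNReal.ofReal ((1 - ρ) ^ T.card) + ENNReal.ofReal (s / 2) := by
    intro z
    have hS : MeasurableSet {x : Fin n → ℂ |
        ‖(∑ j, x j * (starRingEnd ℂ) (v j)) - z‖ ≤ r} :=
      measSet_abs_le (by fun_prop) z r
    have hmf : Measurable (Set.indicator {x : Fin n → ℂ |
        ‖(∑ j, x j * (starRingEnd ℂ) (v j)) - z‖ ≤ r} (1 : (Fin n → ℂ) → ℝ≥0∞)) :=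
      measurable_one.indicator hS
    rw [vecLaw, ← lintegral_indicator_one hS,
      lintegral_eq_lmarginal_univ (fun _ : Fin n => (0 : ℂ))]
    have hconst : ∀ (u : Finset (Fin n)) (c : ℝ≥0∞) (x : Fin n → ℂ),
        (∫⋯∫⁻_u, (fun _ => c) ∂fun _ : Fin n => sparseG ρ) x = c := by
      intro u c x
      simp only [lmarginal]
      rw [lintegral_const, measure_univ, mul_one]
    have hfg : (∫⋯∫⁻_T, Set.indicator {x : Fin n → ℂ |
          ‖(∑ j, x j * (starRingEnd ℂ) (v j)) - z‖ ≤ r} 1 ∂fun _ : Fin n => sparseG ρ)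
        ≤ ∫⋯∫⁻_T, (fun _ => ENNReal.ofReal ((1 - ρ) ^ T.card) + ENNReal.ofReal (s / 2))
            ∂fun _ : Fin n => sparseG ρ := by
      intro x
      rw [hconst]
      exact key_induction hρl hρu hr hs0 hs1 T v hTmem z x
    have := lmarginal_le_of_subset (μ := fun _ : Fin n => sparseG ρ) (Finset.subset_univ T)
      hmf measurable_const hfg (fun _ : Fin n => (0 : ℂ))
    rw [hconst] at this
    exact this
  have hsup : ENNReal.ofReal s ≤ ENNReal.ofReal ((1 - ρ) ^ T.card) + ENNReal.ofReal (s / 2) :=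
    le_trans h (by rw [pconc]; exact iSup_le hbound)
  have hreal : s ≤ (1 - ρ) ^ T.card + s / 2 := by
    rw [← ENNReal.ofReal_add (pow_nonneg (by linarith) _) (by linarith)] at hsup
    exact (ENNReal.ofReal_le_ofReal_iff
      (add_nonneg (pow_nonneg (by linarith) _) (by linarith))).mp hsup
  have hhalf : s / 2 ≤ (1 - ρ) ^ T.card := by linarith
  have hexp : (1 - ρ) ^ T.card ≤ Real.exp (-(ρ * T.card)) := by
    have h1 : 1 - ρ ≤ Real.exp (-ρ) := by linarith [Real.add_one_le_exp (-ρ)]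
    calc (1 - ρ) ^ T.card ≤ Real.exp (-ρ) ^ T.card :=
          pow_le_pow_left₀ (by linarith) h1 T.card
      _ = Real.exp (-(ρ * T.card)) := by
          rw [← Real.exp_nat_mul]; congr 1; ring
  have hlog : Real.log (s / 2) ≤ -(ρ * T.card) := by
    have hll := Real.log_le_log (by linarith : (0:ℝ) < s / 2) (le_trans hhalf hexp)
    rwa [Real.log_exp] at hll
  have hlogeq : Real.log (2 / s) = -Real.log (s / 2) := by
    rw [← Real.log_inv, inv_div]
  rw [le_div_iff₀ hρl]
  rw [hlogeq]
  linarith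

end
end
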